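/- arXiv:2408.13649 — 3 statements merged into one kernel-verified Lean document; each statement's English description precedes it below -/
import Mathlib

section
/- The vector N ~ MPMRF(λ, α, T) satisfies the local Markov property on T: for any two vertices u, w ∈ V with u ≠ w and (u, w) ∉ E, the random variables N_u and N_w are conditionally independent given the family (N_j : (u, j) ∈ E) of components at the neighbors of u. Hence N is a Markov random field on the tree T. -/
open MeasureTheory ProbabilityTheory
open scoped ProbabilityTheory

/-- The Poisson probability mass function with mean `lam`, evaluated at `k`. -/
noncomputable def poissonProb (lam : ℝ) (k : ℕ) : ℝ :=
  Real.exp (-lam) * lam ^ k / (Nat.factorial k)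

/-- The MPMRF construction: a tree-structured Markov random field with Poisson(`lam`)
marginals, built on a tree `G` rooted at `root` via the stochastic representation
`N_root = L_root` and `N_v = α_{(pa v, v)} ∘ N_{pa v} + L_v` for `v ≠ root`, where `∘`
denotes binomial thinning (realized through the i.i.d. Bernoulli indicators `I v i`),
the innovations `L_v` are Poisson, and all innovations and indicator sequences are
mutually independent. -/
structure MPMRF {V : Type} [Fintype V] [DecidableEq V]
    (G : SimpleGraph V) (lam : ℝ) (alpha : Sym2 V → ℝ)
    (Ω : Type) [MeasureSpace Ω] : Type where
  /-- the underlying graph is a tree -/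
  isTree : G.IsTree
  lam_pos : 0 < lam
  alpha_mem : ∀ e ∈ G.edgeSet, alpha e ∈ Set.Icc (0 : ℝ) 1
  /-- the chosen root -/
  root : V
  /-- the parent function of the rooted tree -/
  pa : V → V
  pa_adj : ∀ v, v ≠ root → G.Adj (pa v) v
  pa_dist : ∀ v, v ≠ root → G.dist root (pa v) + 1 = G.dist root v
  /-- innovation random variables -/
  L : V → Ω → ℕ
  /-- Bernoulli indicators used in the binomial thinnings -/
  I : V → ℕ → Ω → ℕ
  /-- the components of the Markov random field -/
  N : V → Ω → ℕ
  meas_L : ∀ v, Measurable (L v)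
  meas_I : ∀ v i, Measurable (I v i)
  meas_N : ∀ v, Measurable (N v)
  I_le_one : ∀ v i ω, I v i ω ≤ 1
  I_bern : ∀ v, v ≠ root → ∀ i,
    ℙ {ω | I v i ω = 1} = ENNReal.ofReal (alpha s(pa v, v))
  L_root_poisson : ∀ k, ℙ {ω | L root ω = k} = ENNReal.ofReal (poissonProb lam k)
  L_poisson : ∀ v, v ≠ root → ∀ k,
    ℙ {ω | L v ω = k} =
      ENNReal.ofReal (poissonProb (lam * (1 - alpha s(pa v, v))) k)
  /-- the innovations and all indicator variables are mutually independent -/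
  indep : iIndepFun
    (Sum.elim L (fun p : V × ℕ => I p.1 p.2)) ℙ
  N_root : N root = L root
  N_rec : ∀ v, v ≠ root → ∀ ω,
    N v ω = (∑ i ∈ Finset.range (N (pa v) ω), I v i ω) + L v ω

namespace MPMRF

open SimpleGraph

variable {V : Type} [Fintype V] [DecidableEq V] {G : SimpleGraph V} {lam : ℝ}
  {alpha : Sym2 V → ℝ} {Ω : Type} [MeasureSpace Ω]
variable (M : MPMRF G lam alpha Ω)

/-- depth of a vertex: distance from the root. -/
noncomputable def dep (v : V) : ℕ := G.dist M.root v

variable {M}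

lemma eq_root_of_dep_eq_zero {v : V} (h : M.dep v = 0) : v = M.root :=
  ((M.isTree.isConnected.dist_eq_zero_iff).mp h).symm

lemma dep_pa {v : V} (h : v ≠ M.root) : M.dep (M.pa v) + 1 = M.dep v := M.pa_dist v h

lemma dep_pos {v : V} (h : v ≠ M.root) : 0 < M.dep v := by
  rcases Nat.eq_zero_or_pos (M.dep v) with h0 | h0
  · exact absurd (eq_root_of_dep_eq_zero h0) h
  · exact h0

lemma dep_paIter {v : V} : ∀ k, k ≤ M.dep v → M.dep (M.pa^[k] v) + k = M.dep v := by
  intro k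
  induction k with
  | zero => simp
  | succ k ih =>
    intro hk
    have hk' : k ≤ M.dep v := by omega
    have h1 := ih hk'
    have hne : M.pa^[k] v ≠ M.root := by
      intro he
      rw [he] at h1
      have : M.dep M.root = 0 := by
        simp [dep, SimpleGraph.dist_self]
      omega
    have h2 := dep_pa (M := M) hne
    rw [Function.iterate_succ_apply']
    omega

lemma paIter_root {v : V} : M.pa^[M.dep v] v = M.root := by
  apply eq_root_of_dep_eq_zero
  have := dep_paIter (M := M) (v := v) (M.dep v) le_rfl
  omega

/-- the set of ancestors of `v` (including `v` and the root). -/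
def Anc (M : MPMRF G lam alpha Ω) (v : V) : Set V :=
  {x | ∃ k, k ≤ M.dep v ∧ M.pa^[k] v = x}

lemma mem_anc_self {v : V} : v ∈ M.Anc v := ⟨0, Nat.zero_le _, rfl⟩

lemma pa_mem_anc {v : V} (h : v ≠ M.root) : M.pa v ∈ M.Anc v :=
  ⟨1, dep_pos h, Function.iterate_one M.pa ▸ rfl⟩

lemma dep_of_mem_anc {x v : V} (h : x ∈ M.Anc v) : ∃ k ≤ M.dep v, M.dep x + k = M.dep v := by
  obtain ⟨k, hk, rfl⟩ := h
  exact ⟨k, hk, dep_paIter k hk⟩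

lemma dep_le_of_mem_anc {x v : V} (h : x ∈ M.Anc v) : M.dep x ≤ M.dep v := by
  obtain ⟨k, hk, h2⟩ := dep_of_mem_anc h; omega

lemma anc_subset {x v : V} (h : x ∈ M.Anc v) : M.Anc x ⊆ M.Anc v := by
  obtain ⟨k, hk, rfl⟩ := h
  rintro y ⟨l, hl, rfl⟩
  refine ⟨l + k, ?_, Function.iterate_add_apply _ _ _ _⟩
  have := dep_paIter (M := M) (v := v) k hk
  omega

lemma dep_ne_of_adj {x y : V} (h : G.Adj x y) : M.dep x ≠ M.dep y := by
  intro he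
  obtain ⟨p, hp, hpl⟩ := M.isTree.isConnected.exists_path_of_dist M.root x
  by_cases hy : y ∈ p.support
  · have h1 : G.dist M.root y ≤ (p.takeUntil y hy).length := SimpleGraph.dist_le _
    have h2 : (p.takeUntil y hy).length + (p.dropUntil y hy).length = p.length := by
      have := congrArg Walk.length (p.take_spec hy)
      rwa [Walk.length_append] at this
    have h3 : (p.dropUntil y hy).length = 0 := by
      simp only [dep] at he; omega
    exact h.ne' (Walk.eq_of_length_eq_zero h3)
  · have hP : (p.concat h).IsPath := by
      rw [← Walk.isPath_reverse_iff, Walk.reverse_concat]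
      refine (hp.reverse).cons ?_
      simpa [Walk.support_reverse] using hy
    obtain ⟨q, hq, hql⟩ := M.isTree.isConnected.exists_path_of_dist M.root y
    have huniq := (M.isTree.existsUnique_path M.root y).unique hP hq
    have hlen : (p.concat h).length = q.length := by rw [huniq]
    rw [Walk.length_concat, hpl, hql] at hlen
    simp only [dep] at he; omega

lemma parent_unique {x y j : V} (hxj : G.Adj x j) (hyj : G.Adj y j)
    (hx : M.dep x + 1 = M.dep j) (hy : M.dep y + 1 = M.dep j) : x = y := by
  obtain ⟨p, hp, hpl⟩ := M.isTree.isConnected.exists_path_of_dist M.root x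
  obtain ⟨q, hq, hql⟩ := M.isTree.isConnected.exists_path_of_dist M.root y
  have hP : (p.concat hxj).IsPath := by
    apply Walk.isPath_of_length_eq_dist
    rw [Walk.length_concat, hpl]
    exact hx
  have hQ : (q.concat hyj).IsPath := by
    apply Walk.isPath_of_length_eq_dist
    rw [Walk.length_concat, hql]
    exact hy
  have huniq := (M.isTree.existsUnique_path M.root j).unique hP hQ
  obtain ⟨hv, -⟩ := Walk.concat_inj huniq
  exact hv

lemma adj_classify {x y : V} (h : G.Adj x y) :
    (y ≠ M.root ∧ M.pa y = x) ∨ (x ≠ M.root ∧ M.pa x = y) := by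
  have h1 : M.dep y ≤ M.dep x + 1 := by
    have := M.isTree.isConnected.dist_triangle (u := M.root) (v := x) (w := y)
    have hd : G.dist x y = 1 := SimpleGraph.dist_eq_one_iff_adj.mpr h
    simp only [dep]; omega
  have h2 : M.dep x ≤ M.dep y + 1 := by
    have := M.isTree.isConnected.dist_triangle (u := M.root) (v := y) (w := x)
    have hd : G.dist y x = 1 := SimpleGraph.dist_eq_one_iff_adj.mpr h.symm
    simp only [dep]; omega
  have h3 := dep_ne_of_adj (M := M) h
  rcases Nat.lt_or_ge (M.dep x) (M.dep y) with hlt | hge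
  · left
    have hdy : M.dep y = M.dep x + 1 := by omega
    have hyr : y ≠ M.root := by
      intro he; rw [he] at hdy
      have : M.dep M.root = 0 := by simp [dep, SimpleGraph.dist_self]
      omega
    refine ⟨hyr, ?_⟩
    exact parent_unique (M.pa_adj y hyr) h (dep_pa hyr) (by omega)
  · right
    have hdx : M.dep x = M.dep y + 1 := by omega
    have hxr : x ≠ M.root := by
      intro he; rw [he] at hdx
      have : M.dep M.root = 0 := by simp [dep, SimpleGraph.dist_self]
      omega
    refine ⟨hxr, ?_⟩
    exact parent_unique (M.pa_adj x hxr) h.symm (dep_pa hxr) (by omega)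

end MPMRF

namespace MPMRF

open SimpleGraph MeasureTheory ProbabilityTheory

variable {V : Type} [Fintype V] [DecidableEq V] {G : SimpleGraph V} {lam : ℝ}
  {alpha : Sym2 V → ℝ} {Ω : Type} [MeasureSpace Ω]
variable (M : MPMRF G lam alpha Ω)

/-- the combined family of innovations and thinning indicators -/
def fam (M : MPMRF G lam alpha Ω) : (V ⊕ V × ℕ) → Ω → ℕ :=
  Sum.elim M.L (fun p : V × ℕ => M.I p.1 p.2)

/-- the vertex at which a member of the family lives -/
def vtx : (V ⊕ V × ℕ) → V := Sum.elim id Prod.fst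

lemma meas_fam : ∀ k, Measurable (M.fam k) := by
  rintro (x | p)
  · exact M.meas_L x
  · exact M.meas_I p.1 p.2

/-- the σ-algebra generated by the innovations and indicators at vertices in `U` -/
def blk (M : MPMRF G lam alpha Ω) (U : Set V) : MeasurableSpace Ω :=
  ⨆ k ∈ vtx ⁻¹' U, MeasurableSpace.comap (M.fam k) inferInstance

variable {M}

lemma blk_le (U : Set V) : M.blk U ≤ (inferInstance : MeasurableSpace Ω) :=
  iSup₂_le fun k _ => (M.meas_fam k).comap_le

lemma blk_mono {U U' : Set V} (h : U ⊆ U') : M.blk U ≤ M.blk U' :=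
  biSup_mono (Set.preimage_mono h)

lemma meas_of_mem_blk {k : V ⊕ V × ℕ} {U : Set V} (h : vtx k ∈ U) :
    Measurable[M.blk U] (M.fam k) := by
  have h1 : Measurable[MeasurableSpace.comap (M.fam k) inferInstance] (M.fam k) :=
    measurable_iff_comap_le.mpr le_rfl
  exact h1.mono (le_biSup (f := fun k => MeasurableSpace.comap (M.fam k) inferInstance) h) le_rfl

lemma meas_L_blk {x : V} {U : Set V} (h : x ∈ U) : Measurable[M.blk U] (M.L x) :=
  meas_of_mem_blk (k := Sum.inl x) h

lemma meas_I_blk {x : V} (i : ℕ) {U : Set V} (h : x ∈ U) : Measurable[M.blk U] (M.I x i) :=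
  meas_of_mem_blk (k := Sum.inr (x, i)) h

/-- the thinning-plus-innovation map at `v` applied to a frozen input value `m` -/
noncomputable def theta (M : MPMRF G lam alpha Ω) (v : V) (m : ℕ) : Ω → ℕ :=
  fun ω => (∑ i ∈ Finset.range m, M.I v i ω) + M.L v ω

lemma meas_theta_blk {v : V} {U : Set V} (h : v ∈ U) (m : ℕ) :
    Measurable[M.blk U] (M.theta v m) :=
  (Finset.measurable_sum _ fun i _ => meas_I_blk i h).add (meas_L_blk h)

lemma meas_comp_nat {m : MeasurableSpace Ω} {g : Ω → ℕ} (hg : Measurable[m] g)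
    {h : ℕ → Ω → ℕ} (hh : ∀ n, Measurable[m] (h n)) :
    Measurable[m] (fun ω => h (g ω) ω) := by
  apply measurable_to_countable'
  intro k
  have he : (fun ω => h (g ω) ω) ⁻¹' {k} = ⋃ n, g ⁻¹' {n} ∩ (h n) ⁻¹' {k} := by
    ext ω
    simp only [Set.mem_preimage, Set.mem_singleton_iff, Set.mem_iUnion, Set.mem_inter_iff]
    exact ⟨fun hk => ⟨g ω, rfl, hk⟩, by rintro ⟨n, h1, h2⟩; rw [h1]; exact h2⟩
  rw [he]
  exact MeasurableSet.iUnion fun n =>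
    (hg (measurableSet_singleton n)).inter (hh n (measurableSet_singleton k))

lemma meas_N_anc_aux : ∀ (n : ℕ) (v : V), M.dep v = n → Measurable[M.blk (M.Anc v)] (M.N v) := by
  intro n
  induction n using Nat.strong_induction_on with
  | _ n ih =>
    intro v hv
    by_cases hr : v = M.root
    · subst hr
      rw [M.N_root]
      exact meas_L_blk mem_anc_self
    · have hrepr : M.N v = fun ω => M.theta v (M.N (M.pa v) ω) ω :=
        funext fun ω => M.N_rec v hr ω
      rw [hrepr]
      have hdp := dep_pa (M := M) hr
      apply meas_comp_nat
      · exact (ih (M.dep (M.pa v)) (by omega) (M.pa v) rfl).mono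
          (blk_mono (anc_subset (pa_mem_anc hr))) le_rfl
      · intro m
        exact meas_theta_blk mem_anc_self m

lemma meas_N_anc (v : V) : Measurable[M.blk (M.Anc v)] (M.N v) :=
  meas_N_anc_aux (M.dep v) v rfl

lemma indep_blk {U U' : Set V} (h : Disjoint U U') :
    ProbabilityTheory.Indep (M.blk U) (M.blk U') ℙ := by
  have h1 : ∀ k : V ⊕ V × ℕ,
      MeasurableSpace.comap (M.fam k) inferInstance ≤ (inferInstance : MeasurableSpace Ω) :=
    fun k => (M.meas_fam k).comap_le
  exact indep_iSup_of_disjoint h1 M.indep.iIndep (h.preimage vtx)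

lemma meas_inter_blk {U U' : Set V} (h : Disjoint U U') {A B : Set Ω}
    (hA : MeasurableSet[M.blk U] A) (hB : MeasurableSet[M.blk U'] B) :
    ℙ (A ∩ B) = ℙ A * ℙ B :=
  ((Indep_iff _ _ _).mp (indep_blk h)) A B hA hB

/-- the chain process restarted from value `a`, running from `pa^[c] w` down to `w`. -/
noncomputable def chain (M : MPMRF G lam alpha Ω) (w : V) (c : ℕ) (a : ℕ) : ℕ → Ω → ℕ
  | 0 => fun _ => a
  | (t+1) => fun ω => M.theta (M.pa^[c - (t+1)] w) (M.chain w c a t ω) ω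

lemma meas_chain {w : V} {c a : ℕ} {U : Set V}
    (hU : ∀ s, 1 ≤ s → s ≤ c → M.pa^[c - s] w ∈ U) :
    ∀ t, t ≤ c → Measurable[M.blk U] (M.chain w c a t) := by
  intro t
  induction t with
  | zero => exact fun _ => measurable_const
  | succ t iht =>
    intro ht
    exact meas_comp_nat (iht (by omega)) fun m => meas_theta_blk (hU (t+1) (by omega) ht) m

lemma chain_spec {w : V} {c : ℕ} (hc : c ≤ M.dep w) {a : ℕ} {ω : Ω}
    (ha : M.N (M.pa^[c] w) ω = a) :
    ∀ t, t ≤ c → M.chain w c a t ω = M.N (M.pa^[c - t] w) ω := by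
  intro t
  induction t with
  | zero => simpa [chain] using ha.symm
  | succ t iht =>
    intro ht
    have hit : M.pa^[c - t] w = M.pa (M.pa^[c - (t+1)] w) := by
      have h1 : c - t = (c - (t+1)) + 1 := by omega
      rw [h1, Function.iterate_succ_apply']
    have hnr : M.pa^[c - (t+1)] w ≠ M.root := by
      intro he
      have h1 := dep_paIter (M := M) (v := w) (c - (t+1)) (by omega)
      rw [he] at h1
      have : M.dep M.root = 0 := by simp [dep, SimpleGraph.dist_self]
      omega
    show M.theta (M.pa^[c - (t+1)] w) (M.chain w c a t ω) ω = _
    rw [iht (by omega), hit]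
    exact (M.N_rec _ hnr ω).symm

end MPMRF

namespace MPMRF

open SimpleGraph MeasureTheory ProbabilityTheory

variable {V : Type} [Fintype V] [DecidableEq V] {G : SimpleGraph V} {lam : ℝ}
  {alpha : Sym2 V → ℝ} {Ω : Type} [MeasureSpace Ω]
variable {M : MPMRF G lam alpha Ω}

lemma measSet_N {x : V} {U : Set V} (h : M.Anc x ⊆ U) (n : ℕ) :
    MeasurableSet[M.blk U] {ω | M.N x ω = n} :=
  ((meas_N_anc x).mono (blk_mono h) le_rfl) (measurableSet_singleton n)

lemma measSet_theta {v : V} {U : Set V} (h : v ∈ U) (m n : ℕ) :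
    MeasurableSet[M.blk U] {ω | M.theta v m ω = n} :=
  (meas_theta_blk h m) (measurableSet_singleton n)

lemma dep_adj_le {x y : V} (h : G.Adj x y) : M.dep y ≤ M.dep x + 1 := by
  have h1 := M.isTree.isConnected.dist_triangle (u := M.root) (v := x) (w := y)
  have hd : G.dist x y = 1 := SimpleGraph.dist_eq_one_iff_adj.mpr h
  simp only [dep]
  omega

lemma root_mem_anc {v : V} : M.root ∈ M.Anc v := ⟨M.dep v, le_rfl, paIter_root⟩

lemma dep_root_zero : M.dep M.root = 0 := by simp [dep, SimpleGraph.dist_self]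

lemma factorization (M : MPMRF G lam alpha Ω) {u w : V} (huw : u ≠ w)
    (hnadj : ¬ G.Adj u w) (σ : {j : V // G.Adj u j} → ℕ) :
    ∃ F G' : ℕ → ENNReal, ∀ a b : ℕ,
      ℙ (({ω | M.N u ω = a} ∩ ⋂ j : {j : V // G.Adj u j}, {ω | M.N j.val ω = σ j})
          ∩ {ω | M.N w ω = b}) = F a * G' b := by
  by_cases hD : u ∈ M.Anc w
  · -- Case II : `w` is a strict descendant of `u`
    obtain ⟨k, hk, hpk⟩ := hD
    have hk0 : k ≠ 0 := by rintro rfl; exact huw (by simpa using hpk.symm)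
    have hdw := dep_paIter (M := M) (v := w) k hk
    rw [hpk] at hdw
    have hk1 : k ≠ 1 := by
      rintro rfl
      have hwr : w ≠ M.root := by
        intro he
        have h0 : M.dep M.root = 0 := dep_root_zero
        rw [he] at hdw
        omega
      have hadj := M.pa_adj w hwr
      rw [show M.pa w = u from by simpa using hpk] at hadj
      exact hnadj hadj
    have hcd : k - 1 ≤ M.dep w := by omega
    have hdj := dep_paIter (M := M) (v := w) (k - 1) hcd
    have hdj' : M.dep (M.pa^[k - 1] w) = M.dep u + 1 := by omega
    have hjpa : M.pa (M.pa^[k - 1] w) = u := by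
      have h1 : M.pa (M.pa^[k - 1] w) = M.pa^[(k - 1) + 1] w :=
        (Function.iterate_succ_apply' _ _ _).symm
      rw [h1, show k - 1 + 1 = k from by omega, hpk]
    have hjr : M.pa^[k - 1] w ≠ M.root := by
      intro he
      rw [he, dep_root_zero] at hdj'
      omega
    have hadj_uj : G.Adj u (M.pa^[k - 1] w) := by
      have := M.pa_adj _ hjr
      rwa [hjpa] at this
    have hdisj : Disjoint {x : V | M.dep x ≤ M.dep u + 1} {x : V | M.dep u + 2 ≤ M.dep x} := by
      rw [Set.disjoint_left]
      intro x h1 h2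
      simp only [Set.mem_setOf_eq] at h1 h2
      omega
    have hErest_meas : ∀ a : ℕ, MeasurableSet[M.blk {x : V | M.dep x ≤ M.dep u + 1}]
        ({ω | M.N u ω = a} ∩ ⋂ j' : {j' : V // G.Adj u j'}, {ω | M.N j'.val ω = σ j'}) := by
      intro a
      refine (measSet_N ?_ a).inter (MeasurableSet.iInter fun j' => measSet_N ?_ (σ j'))
      · intro x hx
        have := dep_le_of_mem_anc hx
        simp only [Set.mem_setOf_eq]
        omega
      · intro x hx
        have h1 := dep_le_of_mem_anc hx
        have h2 := dep_adj_le (M := M) j'.prop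
        simp only [Set.mem_setOf_eq]
        omega
    have hChain_meas : ∀ b : ℕ, MeasurableSet[M.blk {x : V | M.dep u + 2 ≤ M.dep x}]
        ((M.chain w (k - 1) (σ ⟨M.pa^[k - 1] w, hadj_uj⟩) (k - 1)) ⁻¹' {b}) := by
      intro b
      refine (meas_chain ?_ (k - 1) le_rfl) (measurableSet_singleton b)
      intro s hs1 hs2
      have := dep_paIter (M := M) (v := w) (k - 1 - s) (by omega)
      simp only [Set.mem_setOf_eq]
      omega
    refine ⟨fun a => ℙ ({ω | M.N u ω = a} ∩ ⋂ j' : {j' : V // G.Adj u j'},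
        {ω | M.N j'.val ω = σ j'}),
      fun b => ℙ ((M.chain w (k - 1) (σ ⟨M.pa^[k - 1] w, hadj_uj⟩) (k - 1)) ⁻¹' {b}),
      fun a b => ?_⟩
    have hset : ({ω | M.N u ω = a} ∩ ⋂ j' : {j' : V // G.Adj u j'}, {ω | M.N j'.val ω = σ j'})
          ∩ {ω | M.N w ω = b}
        = ({ω | M.N u ω = a} ∩ ⋂ j' : {j' : V // G.Adj u j'}, {ω | M.N j'.val ω = σ j'})
          ∩ (M.chain w (k - 1) (σ ⟨M.pa^[k - 1] w, hadj_uj⟩) (k - 1)) ⁻¹' {b} := by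
      ext ω
      simp only [Set.mem_inter_iff, Set.mem_setOf_eq, Set.mem_iInter, Set.mem_preimage,
        Set.mem_singleton_iff]
      have hiff : ∀ (h2 : ∀ j' : {j' : V // G.Adj u j'}, M.N j'.val ω = σ j'),
          M.chain w (k - 1) (σ ⟨M.pa^[k - 1] w, hadj_uj⟩) (k - 1) ω = M.N w ω := by
        intro h2
        have hspec := chain_spec (M := M) hcd (a := σ ⟨M.pa^[k - 1] w, hadj_uj⟩) (ω := ω)
          (h2 ⟨M.pa^[k - 1] w, hadj_uj⟩) (k - 1) le_rfl
        rw [hspec]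
        simp
      constructor
      · rintro ⟨⟨h1, h2⟩, h3⟩
        exact ⟨⟨h1, h2⟩, by rw [hiff h2]; exact h3⟩
      · rintro ⟨⟨h1, h2⟩, h3⟩
        exact ⟨⟨h1, h2⟩, by rw [← hiff h2]; exact h3⟩
    rw [hset, meas_inter_blk hdisj (hErest_meas a) (hChain_meas b)]
  · -- Case I : `w` is not a descendant of `u`
    have hur : u ≠ M.root := by
      rintro rfl
      exact hD root_mem_anc
    have hadj_uP : G.Adj u (M.pa u) := (M.pa_adj u hur).symm
    have hchild : ∀ j' : {j' : V // G.Adj u j'}, j' ≠ ⟨M.pa u, hadj_uP⟩ →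
        j'.val ≠ M.root ∧ M.pa j'.val = u := by
      intro j' hne
      rcases adj_classify (M := M) j'.prop with h | h
      · exact h
      · exact absurd (Subtype.ext h.2.symm) hne
    have hAncP_D : M.Anc (M.pa u) ⊆ {v : V | u ∈ M.Anc v}ᶜ := by
      intro x hx hxD
      have h1 : u ∈ M.Anc (M.pa u) := anc_subset hx hxD
      have h2 := dep_le_of_mem_anc h1
      have h3 := dep_pa (M := M) hur
      omega
    have hAncw_D : M.Anc w ⊆ {v : V | u ∈ M.Anc v}ᶜ := fun x hx hxD => hD (anc_subset hx hxD)
    have hu_D : u ∈ {v : V | u ∈ M.Anc v} := mem_anc_self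
    have hchild_D : ∀ j' : {j' : V // G.Adj u j'}, ∀ hne : j' ≠ ⟨M.pa u, hadj_uP⟩,
        j'.val ∈ {v : V | u ∈ M.Anc v} := by
      intro j' hne
      obtain ⟨hjr, hjpa⟩ := hchild j' hne
      have := pa_mem_anc (M := M) hjr
      rwa [hjpa] at this
    have hA_meas : ∀ b : ℕ, MeasurableSet[M.blk {v : V | u ∈ M.Anc v}ᶜ]
        ({ω | M.N (M.pa u) ω = σ ⟨M.pa u, hadj_uP⟩} ∩ {ω | M.N w ω = b}) :=
      fun b => (measSet_N hAncP_D _).inter (measSet_N hAncw_D b)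
    have hB_meas : ∀ a : ℕ, MeasurableSet[M.blk {v : V | u ∈ M.Anc v}]
        ({ω | M.theta u (σ ⟨M.pa u, hadj_uP⟩) ω = a} ∩
          ⋂ j' : {j' : V // G.Adj u j'}, ⋂ _ : j' ≠ ⟨M.pa u, hadj_uP⟩,
            {ω | M.theta j'.val a ω = σ j'}) := by
      intro a
      exact (measSet_theta hu_D _ a).inter (MeasurableSet.iInter fun j' =>
        MeasurableSet.iInter fun hne => measSet_theta (hchild_D j' hne) a (σ j'))
    refine ⟨fun a => ℙ ({ω | M.theta u (σ ⟨M.pa u, hadj_uP⟩) ω = a} ∩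
        ⋂ j' : {j' : V // G.Adj u j'}, ⋂ _ : j' ≠ ⟨M.pa u, hadj_uP⟩,
          {ω | M.theta j'.val a ω = σ j'}),
      fun b => ℙ ({ω | M.N (M.pa u) ω = σ ⟨M.pa u, hadj_uP⟩} ∩ {ω | M.N w ω = b}),
      fun a b => ?_⟩
    have hset : ({ω | M.N u ω = a} ∩ ⋂ j' : {j' : V // G.Adj u j'}, {ω | M.N j'.val ω = σ j'})
          ∩ {ω | M.N w ω = b}
        = ({ω | M.N (M.pa u) ω = σ ⟨M.pa u, hadj_uP⟩} ∩ {ω | M.N w ω = b}) ∩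
          ({ω | M.theta u (σ ⟨M.pa u, hadj_uP⟩) ω = a} ∩
            ⋂ j' : {j' : V // G.Adj u j'}, ⋂ _ : j' ≠ ⟨M.pa u, hadj_uP⟩,
              {ω | M.theta j'.val a ω = σ j'}) := by
      ext ω
      simp only [Set.mem_inter_iff, Set.mem_setOf_eq, Set.mem_iInter]
      constructor
      · rintro ⟨⟨h1, h2⟩, h3⟩
        have hP : M.N (M.pa u) ω = σ ⟨M.pa u, hadj_uP⟩ := h2 ⟨M.pa u, hadj_uP⟩
        refine ⟨⟨hP, h3⟩, ?_, ?_⟩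
        · rw [← hP, ← h1]
          exact (M.N_rec u hur ω).symm
        · intro j' hne
          obtain ⟨hjr, hjpa⟩ := hchild j' hne
          have hrec : M.N j'.val ω = M.theta j'.val (M.N u ω) ω := by
            have := M.N_rec j'.val hjr ω
            rwa [hjpa] at this
          rw [← h1, ← hrec]
          exact h2 j'
      · rintro ⟨⟨hP, h3⟩, hθu, hθc⟩
        have h1 : M.N u ω = a := by
          have hrec : M.N u ω = M.theta u (M.N (M.pa u) ω) ω := M.N_rec u hur ω
          rw [hrec, hP]
          exact hθu
        refine ⟨⟨h1, ?_⟩, h3⟩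
        intro j'
        by_cases hne : j' = ⟨M.pa u, hadj_uP⟩
        · rw [hne]
          exact hP
        · obtain ⟨hjr, hjpa⟩ := hchild j' hne
          have hrec : M.N j'.val ω = M.theta j'.val (M.N u ω) ω := by
            have := M.N_rec j'.val hjr ω
            rwa [hjpa] at this
          rw [hrec, h1]
          exact hθc j' hne
    rw [hset, meas_inter_blk disjoint_compl_left (hA_meas b) (hB_meas a), mul_comm]

end MPMRF

open MeasureTheory ProbabilityTheory in
/-- Conditional probability with respect to the σ-algebra generated by a random variable
with countable discrete range: it is a.e. equal to the ratio of measures on atoms. -/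
lemma condexp_discrete_ratio {Ω E : Type*} [mΩ : MeasurableSpace Ω] {μ : Measure Ω}
    [IsFiniteMeasure μ] [Countable E] [mE : MeasurableSpace E] [MeasurableSingletonClass E]
    {X : Ω → E} (hX : Measurable X) (hle : MeasurableSpace.comap X mE ≤ mΩ)
    {A : Set Ω} (hA : MeasurableSet A) :
    (μ⟦A | MeasurableSpace.comap X mE⟧) =ᵐ[μ]
      fun ω => (μ (A ∩ X ⁻¹' {X ω}) / μ (X ⁻¹' {X ω})).toReal := by
  set φ : E → ℝ := fun e => (μ (A ∩ X ⁻¹' {e}) / μ (X ⁻¹' {e})).toReal with hφdef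
  set g : Ω → ℝ := fun ω => φ (X ω) with hgdef
  have hgm' : Measurable[MeasurableSpace.comap X mE] g :=
    (measurable_of_countable φ).comp (measurable_iff_comap_le.mpr le_rfl)
  have hbound : ∀ ω, ‖g ω‖ ≤ 1 := by
    intro ω
    rw [Real.norm_eq_abs, abs_of_nonneg ENNReal.toReal_nonneg]
    have h1 : μ (A ∩ X ⁻¹' {X ω}) / μ (X ⁻¹' {X ω}) ≤ 1 := by
      apply ENNReal.div_le_of_le_mul
      rw [one_mul]
      exact measure_mono Set.inter_subset_right
    calc (μ (A ∩ X ⁻¹' {X ω}) / μ (X ⁻¹' {X ω})).toReal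
        ≤ (1 : ENNReal).toReal := ENNReal.toReal_mono ENNReal.one_ne_top h1
      _ = 1 := by simp
  have hgmeas : Measurable g := hgm'.mono hle le_rfl
  have hgint : Integrable g μ :=
    Integrable.mono' (integrable_const 1) hgmeas.aestronglyMeasurable (ae_of_all _ hbound)
  have hf : Integrable (A.indicator fun _ => (1 : ℝ)) μ := (integrable_const 1).indicator hA
  symm
  refine ae_eq_condExp_of_forall_setIntegral_eq hle hf (fun s _ _ => hgint.integrableOn)
    ?_ ⟨g, hgm'.stronglyMeasurable, Filter.EventuallyEq.rfl⟩
  rintro s ⟨T, -, rfl⟩ -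
  have hdecomp : X ⁻¹' T = ⋃ e : T, X ⁻¹' {(e : E)} := by
    ext ω
    simp only [Set.mem_preimage, Set.mem_iUnion, Set.mem_singleton_iff]
    exact ⟨fun h => ⟨⟨X ω, h⟩, rfl⟩, by rintro ⟨e, he⟩; rw [he]; exact e.prop⟩
  have hmeas_atom : ∀ e : T, MeasurableSet (X ⁻¹' {(e : E)}) :=
    fun e => hX (measurableSet_singleton _)
  have hdisj : Pairwise (Function.onFun Disjoint fun e : T => X ⁻¹' {(e : E)}) := by
    intro e1 e2 hne
    rw [Function.onFun, Set.disjoint_left]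
    intro ω h1 h2
    simp only [Set.mem_preimage, Set.mem_singleton_iff] at h1 h2
    exact hne (Subtype.ext (h1 ▸ h2))
  rw [hdecomp, integral_iUnion hmeas_atom hdisj hgint.integrableOn,
    integral_iUnion hmeas_atom hdisj hf.integrableOn]
  congr 1
  funext e
  have hconst : ∫ ω in X ⁻¹' {(e : E)}, g ω ∂μ = (μ (X ⁻¹' {(e : E)})).toReal • φ e := by
    rw [setIntegral_congr_fun (hmeas_atom e) (g := fun _ => φ (e : E))
      (fun ω hω => by simp only [hgdef]; rw [show X ω = (e : E) from hω]),
      setIntegral_const]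
    rfl
  have hind : ∫ ω in X ⁻¹' {(e : E)}, A.indicator (fun _ => (1 : ℝ)) ω ∂μ
      = (μ (A ∩ X ⁻¹' {(e : E)})).toReal := by
    rw [setIntegral_indicator hA]
    simp [Measure.restrict_apply hA, Set.inter_comm]
    rfl
  rw [hconst, hind]
  rcases eq_or_ne (μ (X ⁻¹' {(e : E)})) 0 with h0 | h0
  · rw [h0]
    have : μ (A ∩ X ⁻¹' {(e : E)}) = 0 :=
      measure_mono_null Set.inter_subset_right h0
    simp [this]
  · have hfin : μ (X ⁻¹' {(e : E)}) ≠ ⊤ := measure_ne_top μ _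
    rw [hφdef]
    simp only [smul_eq_mul]
    rw [ENNReal.toReal_div, mul_div_cancel₀]
    exact ENNReal.toReal_ne_zero.mpr ⟨h0, hfin⟩

/-- The MPMRF satisfies the local Markov property on the tree: for any
two vertices `u ≠ w` not joined by an edge, `N_u` and `N_w` are conditionally independent
given the σ-algebra generated by the family `(N_j : (u,j) ∈ E)` of components at the
neighbours of `u`. Hence `N` is a Markov random field on the tree. -/
theorem mpmrf_local_markov {V : Type} [Fintype V] [DecidableEq V]
    (G : SimpleGraph V) (lam : ℝ) (alpha : Sym2 V → ℝ)
    (Ω : Type) [MeasureSpace Ω] [StandardBorelSpace Ω]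
    [IsProbabilityMeasure (ℙ : Measure Ω)]
    (M : MPMRF G lam alpha Ω)
    (u w : V) (huw : u ≠ w) (hnadj : ¬ G.Adj u w)
    (hle : MeasurableSpace.comap
        (fun ω => fun j : {j : V // G.Adj u j} => M.N j ω) MeasurableSpace.pi
      ≤ (inferInstance : MeasurableSpace Ω)) :
    CondIndepFun
      (MeasurableSpace.comap
        (fun ω => fun j : {j : V // G.Adj u j} => M.N j ω) MeasurableSpace.pi)
      hle (M.N u) (M.N w) ℙ := by
  classical
  haveI : MeasurableSingletonClass ({j : V // G.Adj u j} → ℕ) := by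
    constructor
    intro f
    have h : ({f} : Set ({j : V // G.Adj u j} → ℕ)) = Set.pi Set.univ (fun j => {f j}) := by
      ext g
      simp [funext_iff, Set.mem_pi, eq_comm]
    rw [h]
    exact MeasurableSet.univ_pi fun j => measurableSet_singleton _
  have hXmeas : Measurable (fun ω => fun j : {j : V // G.Adj u j} => M.N j ω) :=
    measurable_pi_lambda _ fun j => M.meas_N j
  rw [condIndepFun_iff_condExp_inter_preimage_eq_mul (M.meas_N u) (M.meas_N w)]
  intro s t hs ht
  set X := fun ω => fun j : {j : V // G.Adj u j} => M.N j ω with hXdef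
  have h1 := condexp_discrete_ratio (μ := ℙ) hXmeas hle ((M.meas_N u hs).inter (M.meas_N w ht))
  have h2 := condexp_discrete_ratio (μ := ℙ) hXmeas hle (M.meas_N u hs)
  have h3 := condexp_discrete_ratio (μ := ℙ) hXmeas hle (M.meas_N w ht)
  have hbad : ℙ {ω | ℙ (X ⁻¹' {X ω}) = 0} = 0 := by
    have hsub : {ω | ℙ (X ⁻¹' {X ω}) = 0} ⊆
        ⋃ e : {e : {j : V // G.Adj u j} → ℕ // ℙ (X ⁻¹' {e}) = 0}, X ⁻¹' {e.val} :=
      fun ω hω => Set.mem_iUnion.mpr ⟨⟨X ω, hω⟩, rfl⟩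
    exact measure_mono_null hsub (measure_iUnion_null fun e => e.prop)
  have hnull : ∀ᵐ ω ∂(ℙ : Measure Ω), ℙ (X ⁻¹' {X ω}) ≠ 0 := by
    rw [ae_iff]
    simpa only [not_not] using hbad
  -- the key product identity on atoms
  have hkey : ∀ σ : {j : V // G.Adj u j} → ℕ,
      ℙ (M.N u ⁻¹' s ∩ M.N w ⁻¹' t ∩ X ⁻¹' {σ}) * ℙ (X ⁻¹' {σ})
      = ℙ (M.N u ⁻¹' s ∩ X ⁻¹' {σ}) * ℙ (M.N w ⁻¹' t ∩ X ⁻¹' {σ}) := by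
    intro σ
    obtain ⟨F, G', hFG⟩ := MPMRF.factorization M huw hnadj σ
    have hatom : X ⁻¹' {σ} = ⋂ j : {j : V // G.Adj u j}, {ω | M.N j.val ω = σ j} := by
      ext ω
      simp [funext_iff, hXdef]
    have hgen : ∀ s' t' : Set ℕ,
        ℙ (M.N u ⁻¹' s' ∩ M.N w ⁻¹' t' ∩ X ⁻¹' {σ})
        = (∑' a : s', F a) * (∑' b : t', G' b) := by
      intro s' t'
      have hmeasE : ∀ (a b : ℕ), MeasurableSet
          (({ω | M.N u ω = a} ∩ ⋂ j : {j : V // G.Adj u j}, {ω | M.N j.val ω = σ j})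
            ∩ {ω | M.N w ω = b}) := by
        intro a b
        refine (MeasurableSet.inter (MeasurableSet.inter ?_ ?_) ?_)
        · exact M.meas_N u (measurableSet_singleton a)
        · exact MeasurableSet.iInter fun j => M.meas_N j.val (measurableSet_singleton (σ j))
        · exact M.meas_N w (measurableSet_singleton b)
      have hdec : M.N u ⁻¹' s' ∩ M.N w ⁻¹' t' ∩ X ⁻¹' {σ}
          = ⋃ a : s', ⋃ b : t',
            (({ω | M.N u ω = a} ∩ ⋂ j : {j : V // G.Adj u j}, {ω | M.N j.val ω = σ j})
              ∩ {ω | M.N w ω = b}) := by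
        rw [hatom]
        ext ω
        simp only [Set.mem_inter_iff, Set.mem_preimage, Set.mem_iUnion, Set.mem_setOf_eq,
          Set.mem_iInter]
        constructor
        · rintro ⟨⟨hus, hwt⟩, hσ⟩
          exact ⟨⟨M.N u ω, hus⟩, ⟨M.N w ω, hwt⟩, ⟨rfl, hσ⟩, rfl⟩
        · rintro ⟨a, b, ⟨ha, hσ⟩, hb⟩
          refine ⟨⟨?_, ?_⟩, hσ⟩
          · rw [ha]; exact a.prop
          · rw [hb]; exact b.prop
      have hdisj1 : Pairwise (Function.onFun Disjoint fun a : s' => ⋃ b : t',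
          (({ω | M.N u ω = (a : ℕ)} ∩ ⋂ j : {j : V // G.Adj u j}, {ω | M.N j.val ω = σ j})
            ∩ {ω | M.N w ω = (b : ℕ)})) := by
        intro a1 a2 hne
        rw [Function.onFun, Set.disjoint_left]
        rintro ω hω1 hω2
        simp only [Set.mem_iUnion, Set.mem_inter_iff, Set.mem_setOf_eq] at hω1 hω2
        obtain ⟨b1, ⟨h1', -⟩, -⟩ := hω1
        obtain ⟨b2, ⟨h2', -⟩, -⟩ := hω2
        exact hne (Subtype.ext (h1' ▸ h2'))
      have hdisj2 : ∀ a : ℕ, Pairwise (Function.onFun Disjoint fun b : t' =>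
          (({ω | M.N u ω = a} ∩ ⋂ j : {j : V // G.Adj u j}, {ω | M.N j.val ω = σ j})
            ∩ {ω | M.N w ω = (b : ℕ)})) := by
        intro a b1 b2 hne
        rw [Function.onFun, Set.disjoint_left]
        rintro ω ⟨-, hω1⟩ ⟨-, hω2⟩
        simp only [Set.mem_setOf_eq] at hω1 hω2
        exact hne (Subtype.ext (hω1 ▸ hω2))
      have hinner : ∀ a : s', ℙ (⋃ b : t',
          (({ω | M.N u ω = (a : ℕ)} ∩ ⋂ j : {j : V // G.Adj u j}, {ω | M.N j.val ω = σ j})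
            ∩ {ω | M.N w ω = (b : ℕ)})) = F a * ∑' b : t', G' b := by
        intro a
        rw [measure_iUnion (hdisj2 a) (fun b => hmeasE a b)]
        rw [tsum_congr (fun b : t' => hFG (a : ℕ) (b : ℕ)), ENNReal.tsum_mul_left]
      rw [hdec, measure_iUnion hdisj1 (fun a => MeasurableSet.iUnion fun b => hmeasE a b)]
      rw [tsum_congr hinner, ENNReal.tsum_mul_right]
    have e1 := hgen s t
    have e2 := hgen s Set.univ
    have e3 := hgen Set.univ t
    have e4 := hgen Set.univ Set.univ
    simp only [Set.preimage_univ, Set.inter_univ, Set.univ_inter, tsum_univ] at e2 e3 e4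
    rw [e1, e2, e3, e4]
    ring
  filter_upwards [h1, h2, h3, hnull] with ω hω1 hω2 hω3 hω0
  rw [hω1, hω2, hω3]
  have hκfin : ℙ (X ⁻¹' {X ω}) ≠ ⊤ := measure_ne_top _ _
  have hκ : (ℙ (X ⁻¹' {X ω})).toReal ≠ 0 := ENNReal.toReal_ne_zero.mpr ⟨hω0, hκfin⟩
  have hreal : (ℙ (M.N u ⁻¹' s ∩ M.N w ⁻¹' t ∩ X ⁻¹' {X ω})).toReal
        * (ℙ (X ⁻¹' {X ω})).toReal
      = (ℙ (M.N u ⁻¹' s ∩ X ⁻¹' {X ω})).toReal * (ℙ (M.N w ⁻¹' t ∩ X ⁻¹' {X ω})).toReal := by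
    rw [← ENNReal.toReal_mul, ← ENNReal.toReal_mul, hkey (X ω)]
  rw [ENNReal.toReal_div, ENNReal.toReal_div, ENNReal.toReal_div]
  rw [div_mul_div_comm, ← hreal, mul_div_mul_comm, div_self hκ, mul_one]
end

section
/- The choice of the root has no stochastic incidence: if N is the vector obtained from the MPMRF construction on T with root r, and N′ is the vector obtained from the same construction on the same tree T with the same λ and the same dependence parameters α but with a different root r′ ∈ V, then N and N′ have the same joint distribution on ℕ^V. -/
set_option maxHeartbeats 1000000


open MeasureTheory ProbabilityTheory
open scoped ProbabilityTheory

section Graph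
variable {V : Type} {G : SimpleGraph V}

lemma tree_path_length_eq_dist (hG : G.IsTree) {u v : V} (p : G.Walk u v) (hp : p.IsPath) :
    p.length = G.dist u v := by
  classical
  obtain ⟨q, hq⟩ := hG.isConnected.exists_walk_length_eq_dist u v
  have h1 : p = q.bypass := (hG.existsUnique_path u v).unique hp q.bypass_isPath
  have h1' : p.length = q.bypass.length := by rw [h1]
  have h2 := q.length_bypass_le
  have h3 := SimpleGraph.dist_le p
  omega

lemma tree_adj_dist (hG : G.IsTree) (r : V) {u v : V} (h : G.Adj u v) :
    G.dist r v = G.dist r u + 1 ∨ G.dist r u = G.dist r v + 1 := by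
  classical
  obtain ⟨p, hp⟩ := (hG.existsUnique_path r u).exists
  have hlen : p.length = G.dist r u := tree_path_length_eq_dist hG p hp
  by_cases hv : v ∈ p.support
  · right
    have ht : (p.takeUntil v hv).length = G.dist r v :=
      tree_path_length_eq_dist hG _ (hp.takeUntil hv)
    have hd : (p.dropUntil v hv).length = G.dist v u :=
      tree_path_length_eq_dist hG _ (hp.dropUntil hv)
    have hdv : G.dist v u = 1 := SimpleGraph.dist_eq_one_iff_adj.mpr h.symm
    have hsum : (p.takeUntil v hv).length + (p.dropUntil v hv).length = p.length := by
      have := p.take_spec hv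
      conv_rhs => rw [← this]
      rw [SimpleGraph.Walk.length_append]
    omega
  · left
    have hq : (p.concat h).IsPath := by
      rw [SimpleGraph.Walk.isPath_def, SimpleGraph.Walk.support_concat]
      simp [List.nodup_append, hp.support_nodup, hv]
      exact fun a ha hav => hv (hav ▸ ha)
    have := tree_path_length_eq_dist hG _ hq
    rw [SimpleGraph.Walk.length_concat] at this
    omega

lemma tree_parent_unique (hG : G.IsTree) {r u u' v : V} (h : G.Adj u v) (h' : G.Adj u' v)
    (hd : G.dist r u + 1 = G.dist r v) (hd' : G.dist r u' + 1 = G.dist r v) : u = u' := by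
  classical
  have key : ∀ (w : V) (hw : G.Adj w v), G.dist r w + 1 = G.dist r v →
      ∃ (p : G.Walk r v), p.IsPath ∧ ∃ (q : G.Walk r w) (hq : q.IsPath) (ha : G.Adj w v),
        p = q.concat ha := by
    intro w hw hdw
    obtain ⟨q, hq⟩ := (hG.existsUnique_path r w).exists
    have hlen : q.length = G.dist r w := tree_path_length_eq_dist hG q hq
    have hv : v ∉ q.support := by
      intro hmem
      have ht : (q.takeUntil v hmem).length = G.dist r v :=
        tree_path_length_eq_dist hG _ (hq.takeUntil hmem)
      have := q.length_takeUntil_le hmem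
      omega
    have hcp : (q.concat hw).IsPath := by
      rw [SimpleGraph.Walk.isPath_def, SimpleGraph.Walk.support_concat]
      simp [List.nodup_append, hq.support_nodup, hv]
      exact fun a ha hav => hv (hav ▸ ha)
    exact ⟨q.concat hw, hcp, q, hq, hw, rfl⟩
  obtain ⟨p1, hp1, q1, hq1, ha1, he1⟩ := key u h hd
  obtain ⟨p2, hp2, q2, hq2, ha2, he2⟩ := key u' h' hd'
  have : p1 = p2 := ((hG.existsUnique_path r v).unique hp1 hp2)
  rw [he1, he2] at this
  obtain ⟨hv, -⟩ := SimpleGraph.Walk.concat_inj this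
  exact hv

lemma tree_prod_edges [Fintype V] [DecidableEq V] [Fintype G.edgeSet] (hG : G.IsTree) (r : V) (pa : V → V)
    (hadj : ∀ v, v ≠ r → G.Adj (pa v) v)
    (hdist : ∀ v, v ≠ r → G.dist r (pa v) + 1 = G.dist r v)
    (g : Sym2 V → ℝ) :
    ∏ v ∈ Finset.univ.erase r, g s(pa v, v) = ∏ e ∈ G.edgeFinset, g e := by
  classical
  apply Finset.prod_nbij (fun v => s(pa v, v))
  · intro v hv
    rw [SimpleGraph.mem_edgeFinset, SimpleGraph.mem_edgeSet]
    exact hadj v (Finset.ne_of_mem_erase hv)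
  · intro v hv w hw hvw
    simp only [Finset.coe_erase, Set.mem_diff, Set.mem_singleton_iff] at hv hw
    simp only [Sym2.eq_iff] at hvw
    rcases hvw with ⟨-, h2⟩ | ⟨h1, h2⟩
    · exact h2
    · exfalso
      have e1 := hdist v hv.2
      have e2 := hdist w hw.2
      rw [h1] at e1; rw [← h2] at e2
      omega
  · intro e he
    simp only [Finset.coe_erase, Set.mem_image]
    induction e with
    | _ a b =>
      rw [Finset.mem_coe, SimpleGraph.mem_edgeFinset, SimpleGraph.mem_edgeSet] at he
      rcases tree_adj_dist hG r he with hc | hc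
      · have hbr : b ≠ r := by
          intro hb; rw [hb, SimpleGraph.dist_self] at hc; omega
        have : pa b = a :=
          tree_parent_unique hG (hadj b hbr) he (hdist b hbr) (by omega)
        refine ⟨b, by simp [hbr], by rw [this]⟩
      · have har : a ≠ r := by
          intro ha; rw [ha, SimpleGraph.dist_self] at hc; omega
        have : pa a = b :=
          tree_parent_unique hG (hadj a har) he.symm (hdist a har) (by omega)
        refine ⟨a, by simp [har], by rw [this, Sym2.eq_swap]⟩
  · intro v hv; rfl
end Graph


section Algebra

lemma poissonProb_pos {lam : ℝ} (h : 0 < lam) (k : ℕ) : 0 < poissonProb lam k := by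
  unfold poissonProb
  have := Real.exp_pos (-lam)
  have := pow_pos h k
  positivity

lemma poissonProb_nonneg {lam : ℝ} (h : 0 ≤ lam) (k : ℕ) : 0 ≤ poissonProb lam k := by
  unfold poissonProb
  have := Real.exp_pos (-lam)
  positivity

/-- binomial pmf -/
noncomputable def bp (a : ℝ) (m j : ℕ) : ℝ := (m.choose j : ℝ) * a ^ j * (1 - a) ^ (m - j)

lemma bp_nonneg {a : ℝ} (h0 : 0 ≤ a) (h1 : a ≤ 1) (m j : ℕ) : 0 ≤ bp a m j := by
  unfold bp
  have h2 : (0:ℝ) ≤ 1 - a := by linarith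
  positivity

lemma bp_zero_left (a : ℝ) (j : ℕ) : bp a 0 j = if j = 0 then 1 else 0 := by
  cases j <;> simp [bp]

lemma bp_succ (a : ℝ) (m j : ℕ) :
    bp a (m+1) j = (if j = 0 then 0 else bp a m (j-1) * a) + bp a m j * (1 - a) := by
  unfold bp
  cases j with
  | zero => simp [pow_succ]
  | succ k =>
    simp only [if_neg (Nat.succ_ne_zero k), Nat.add_sub_cancel]
    rw [Nat.choose_succ_succ, Nat.succ_sub_succ]
    push_cast
    rcases lt_or_ge k m with h | h
    · have hmk : m - k = (m - (k+1)) + 1 := by omega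
      rw [hmk, pow_succ]
      ring
    · rcases eq_or_lt_of_le h with h' | h'
      · rw [← h']
        simp [Nat.choose_eq_zero_of_lt (Nat.lt_succ_self m), Nat.choose_self, pow_succ]
      · rw [Nat.choose_eq_zero_of_lt h', Nat.choose_eq_zero_of_lt (by omega : m < k+1)]
        simp

/-- the thinning transition kernel pmf -/
noncomputable def thinKer (a lam' : ℝ) (m k : ℕ) : ℝ :=
  ∑ j ∈ Finset.range (k+1), bp a m j * poissonProb lam' (k - j)

lemma thinKer_nonneg {a lam' : ℝ} (h0 : 0 ≤ a) (h1 : a ≤ 1) (h2 : 0 ≤ lam') (m k : ℕ) :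
    0 ≤ thinKer a lam' m k :=
  Finset.sum_nonneg fun j _ => mul_nonneg (bp_nonneg h0 h1 m j) (poissonProb_nonneg h2 _)

noncomputable def symTerm (lam a : ℝ) (m k j : ℕ) : ℝ :=
  Real.exp (-lam) * Real.exp (-(lam * (1-a))) * (lam*a)^j * (lam*(1-a))^(m-j)
    * (lam*(1-a))^(k-j) / ((j.factorial : ℝ) * ((m-j).factorial : ℝ) * ((k-j).factorial : ℝ))

lemma symTerm_symm (lam a : ℝ) (m k j : ℕ) : symTerm lam a m k j = symTerm lam a k m j := by
  unfold symTerm; ring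

lemma term_eq_symTerm (lam a : ℝ) (m k j : ℕ) (hjm : j ≤ m) (hjk : j ≤ k) :
    poissonProb lam m * (bp a m j * poissonProb (lam * (1-a)) (k - j)) =
      symTerm lam a m k j := by
  unfold poissonProb bp symTerm
  rw [Nat.cast_choose ℝ hjm]
  have hm : lam ^ m = lam ^ j * lam ^ (m - j) := by
    rw [← pow_add]; congr 1; omega
  rw [hm, mul_pow lam (1-a) (m-j), mul_pow lam (1-a) (k-j)]
  have f1 : ((j.factorial : ℝ)) ≠ 0 := Nat.cast_ne_zero.mpr (Nat.factorial_ne_zero j)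
  have f2 : (((m-j).factorial : ℝ)) ≠ 0 := Nat.cast_ne_zero.mpr (Nat.factorial_ne_zero _)
  have f3 : (((k-j).factorial : ℝ)) ≠ 0 := Nat.cast_ne_zero.mpr (Nat.factorial_ne_zero _)
  have f4 : ((m.factorial : ℝ)) ≠ 0 := Nat.cast_ne_zero.mpr (Nat.factorial_ne_zero _)
  field_simp
  ring

lemma pois_mul_thinKer_eq (lam a : ℝ) (m k : ℕ) :
    poissonProb lam m * thinKer a (lam * (1-a)) m k =
      ∑ j ∈ Finset.range (min m k + 1), symTerm lam a m k j := by
  unfold thinKer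
  rw [Finset.mul_sum]
  rw [← Finset.sum_subset (Finset.range_subset_range.mpr (by omega : min m k + 1 ≤ k + 1))]
  · exact Finset.sum_congr rfl fun j hj => by
      rw [Finset.mem_range] at hj
      exact term_eq_symTerm lam a m k j (by omega) (by omega)
  · intro j hj hj'
    rw [Finset.mem_range] at hj hj'
    have hjm : m < j := by omega
    simp [bp, Nat.choose_eq_zero_of_lt hjm]

lemma edgeW_symm (lam a : ℝ) (m k : ℕ) :
    poissonProb lam m * thinKer a (lam * (1-a)) m k =
      poissonProb lam k * thinKer a (lam * (1-a)) k m := by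
  rw [pois_mul_thinKer_eq, pois_mul_thinKer_eq, min_comm k m]
  exact Finset.sum_congr rfl fun j _ => symTerm_symm lam a m k j

end Algebra


section ProbTools
variable {Ω : Type} [MeasureSpace Ω] {ι : Type} {X : ι → Ω → ℕ}

lemma meas_of_mem_biSup {s : Set ι} {j0 : ι} (hj : j0 ∈ s) :
    Measurable[⨆ j ∈ s, MeasurableSpace.comap (X j) ⊤] (X j0) :=
  (measurable_iff_comap_le.mpr le_rfl).mono
    (le_biSup (fun j => MeasurableSpace.comap (X j) ⊤) hj) le_rfl

lemma blocks_indep (hX : ∀ j, Measurable (X j))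
    (h : iIndepFun X ℙ)
    {s t : Set ι} (hst : Disjoint s t) {A B : Set Ω}
    (hA : MeasurableSet[⨆ j ∈ s, MeasurableSpace.comap (X j) ⊤] A)
    (hB : MeasurableSet[⨆ j ∈ t, MeasurableSpace.comap (X j) ⊤] B) :
    (ℙ : Measure Ω) (A ∩ B) = ℙ A * ℙ B := by
  have h_le : ∀ j, MeasurableSpace.comap (X j) ⊤ ≤ (inferInstance : MeasurableSpace Ω) :=
    fun j => (hX j).comap_le
  have hind := indep_biSup_compl h_le h s
  have hts : t ⊆ sᶜ := Set.subset_compl_iff_disjoint_left.mpr hst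
  have hmono : (⨆ j ∈ t, MeasurableSpace.comap (X j) ⊤)
      ≤ ⨆ j ∈ sᶜ, MeasurableSpace.comap (X j) ⊤ := biSup_mono hts
  exact (Indep_iff _ _ _).1 (indep_of_indep_of_le_right hind hmono) A B hA hB

lemma measurable_sum_range_add {m : MeasurableSpace Ω} {g : Ω → ℕ} {h : ℕ → Ω → ℕ}
    {L : Ω → ℕ} (hg : Measurable[m] g) (hh : ∀ i, Measurable[m] (h i))
    (hL : Measurable[m] L) :
    Measurable[m] (fun ω => (∑ i ∈ Finset.range (g ω), h i ω) + L ω) := by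
  apply measurable_to_countable'
  intro k
  have hset : (fun ω => (∑ i ∈ Finset.range (g ω), h i ω) + L ω) ⁻¹' {k}
      = ⋃ n : ℕ, ({ω | g ω = n} ∩ {ω | (∑ i ∈ Finset.range n, h i ω) + L ω = k}) := by
    ext ω
    simp only [Set.mem_preimage, Set.mem_singleton_iff, Set.mem_iUnion, Set.mem_inter_iff,
      Set.mem_setOf_eq]
    constructor
    · intro hk; exact ⟨g ω, rfl, hk⟩
    · rintro ⟨n, hn, hk⟩; rw [← hn] at hk; exact hk
  rw [hset]
  refine MeasurableSet.iUnion fun n => MeasurableSet.inter ?_ ?_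
  · exact hg (measurableSet_singleton n)
  · have : Measurable[m] (fun ω => (∑ i ∈ Finset.range n, h i ω) + L ω) :=
      Measurable.add (Finset.measurable_sum _ (fun i _ => hh i)) hL
    exact this (measurableSet_singleton k)

end ProbTools

section EdgeDefs
variable {V : Type}

noncomputable def PPfun (lam : ℝ) (f : V → ℕ) : Sym2 V → ℝ :=
  Sym2.lift ⟨fun u v => poissonProb lam (f u) * poissonProb lam (f v), fun u v => by ring⟩

noncomputable def edgeBfun (lam : ℝ) (alpha : Sym2 V → ℝ) (f : V → ℕ) : Sym2 V → ℝ :=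
  Sym2.lift ⟨fun u v => poissonProb lam (f u) *
      thinKer (alpha s(u, v)) (lam * (1 - alpha s(u, v))) (f u) (f v),
    fun u v => by
      show poissonProb lam (f u) *
          thinKer (alpha s(u, v)) (lam * (1 - alpha s(u, v))) (f u) (f v)
        = poissonProb lam (f v) *
          thinKer (alpha s(v, u)) (lam * (1 - alpha s(v, u))) (f v) (f u)
      rw [show s(u, v) = s(v, u) from Sym2.eq_swap]
      exact edgeW_symm lam (alpha s(v, u)) (f u) (f v)⟩

lemma rooted_eq_rootfree {G : SimpleGraph V} [Fintype V] [DecidableEq V] [Fintype G.edgeSet]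
    (hG : G.IsTree) (lam : ℝ) (alpha : Sym2 V → ℝ) (r : V) (pa : V → V)
    (hadj : ∀ v, v ≠ r → G.Adj (pa v) v)
    (hdist : ∀ v, v ≠ r → G.dist r (pa v) + 1 = G.dist r v) (f : V → ℕ) :
    (poissonProb lam (f r) * ∏ v ∈ Finset.univ.erase r,
        thinKer (alpha s(pa v, v)) (lam * (1 - alpha s(pa v, v))) (f (pa v)) (f v))
      * ∏ e ∈ G.edgeFinset, PPfun lam f e
    = (∏ v, poissonProb lam (f v)) * ∏ e ∈ G.edgeFinset, edgeBfun lam alpha f e := by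
  have h1 : ∏ e ∈ G.edgeFinset, edgeBfun lam alpha f e
      = ∏ v ∈ Finset.univ.erase r, (poissonProb lam (f (pa v)) *
          thinKer (alpha s(pa v, v)) (lam * (1 - alpha s(pa v, v))) (f (pa v)) (f v)) := by
    rw [← tree_prod_edges hG r pa hadj hdist (edgeBfun lam alpha f)]
    exact Finset.prod_congr rfl fun v hv => rfl
  have h2 : ∏ e ∈ G.edgeFinset, PPfun lam f e
      = ∏ v ∈ Finset.univ.erase r, (poissonProb lam (f (pa v)) * poissonProb lam (f v)) := by
    rw [← tree_prod_edges hG r pa hadj hdist (PPfun lam f)]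
    exact Finset.prod_congr rfl fun v hv => rfl
  rw [h1, h2, ← Finset.mul_prod_erase Finset.univ (fun v => poissonProb lam (f v))
    (Finset.mem_univ r), Finset.prod_mul_distrib, Finset.prod_mul_distrib]
  ring
end EdgeDefs

section MLemmas
open MeasureTheory ProbabilityTheory
variable {V : Type} [Fintype V] [DecidableEq V] {G : SimpleGraph V} {lam : ℝ}
  {alpha : Sym2 V → ℝ} {Ω : Type} [MeasureSpace Ω] [IsProbabilityMeasure (ℙ : Measure Ω)]
  (M : MPMRF G lam alpha Ω)

/-- the combined family of innovations and indicators -/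
noncomputable def MPMRF.X : V ⊕ V × ℕ → Ω → ℕ := Sum.elim M.L (fun p => M.I p.1 p.2)

lemma MPMRF.measX : ∀ j, Measurable (M.X j) := by
  rintro (v | ⟨v, i⟩)
  · exact M.meas_L v
  · exact M.meas_I v i

lemma MPMRF.indepX : iIndepFun M.X ℙ := M.indep

lemma MPMRF.measL_biSup {s : Set (V ⊕ V × ℕ)} {w : V} (h : Sum.inl w ∈ s) :
    Measurable[⨆ j ∈ s, MeasurableSpace.comap (M.X j) ⊤] (M.L w) :=
  meas_of_mem_biSup (X := M.X) (j0 := Sum.inl w) h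

lemma MPMRF.measI_biSup {s : Set (V ⊕ V × ℕ)} {w : V} {i : ℕ} (h : Sum.inr (w, i) ∈ s) :
    Measurable[⨆ j ∈ s, MeasurableSpace.comap (M.X j) ⊤] (M.I w i) :=
  meas_of_mem_biSup (X := M.X) (j0 := Sum.inr (w, i)) h

/-- index set corresponding to a set of vertices -/
def Jset (T : Set V) : Set (V ⊕ V × ℕ) := Sum.inl '' T ∪ Sum.inr '' {p : V × ℕ | p.1 ∈ T}

/-- σ-algebra generated by the variables attached to `T` -/
noncomputable def MPMRF.mJ (T : Set V) : MeasurableSpace Ω :=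
  ⨆ j ∈ Jset T, MeasurableSpace.comap (M.X j) ⊤

lemma MPMRF.measL_mJ {T : Set V} {v : V} (hv : v ∈ T) : Measurable[M.mJ T] (M.L v) :=
  M.measL_biSup (Or.inl ⟨v, hv, rfl⟩)

lemma MPMRF.measI_mJ {T : Set V} {v : V} (hv : v ∈ T) (i : ℕ) :
    Measurable[M.mJ T] (M.I v i) :=
  M.measI_biSup (Or.inr ⟨(v, i), hv, rfl⟩)

lemma MPMRF.measN_mJ {T : Set V} (hcl : ∀ u ∈ T, u ≠ M.root → M.pa u ∈ T) :
    ∀ (n : ℕ) (v : V), G.dist M.root v = n → v ∈ T → Measurable[M.mJ T] (M.N v) := by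
  intro n
  induction n using Nat.strong_induction_on with
  | _ n ih =>
    intro v hd hvT
    by_cases hv : v = M.root
    · subst hv; rw [M.N_root]; exact M.measL_mJ hvT
    · have hrec : M.N v = fun ω => (∑ i ∈ Finset.range (M.N (M.pa v) ω), M.I v i ω) + M.L v ω :=
        funext (M.N_rec v hv)
      have hdist := M.pa_dist v hv
      rw [hrec]
      exact measurable_sum_range_add
        (ih (G.dist M.root (M.pa v)) (by omega) (M.pa v) rfl (hcl v hvT hv))
        (fun i => M.measI_mJ hvT i) (M.measL_mJ hvT)

lemma MPMRF.alpha01 {v : V} (hv : v ≠ M.root) : alpha s(M.pa v, v) ∈ Set.Icc (0:ℝ) 1 :=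
  M.alpha_mem _ ((SimpleGraph.mem_edgeSet G).mpr (M.pa_adj v hv))

lemma MPMRF.I_zero_pmf {w : V} (hw : w ≠ M.root) (i : ℕ) :
    (ℙ : Measure Ω) {ω | M.I w i ω = 0} = ENNReal.ofReal (1 - alpha s(M.pa w, w)) := by
  obtain ⟨ha0, ha1⟩ := M.alpha01 hw
  have hcompl : {ω | M.I w i ω = 0} = {ω | M.I w i ω = 1}ᶜ := by
    ext ω
    have := M.I_le_one w i ω
    simp only [Set.mem_setOf_eq, Set.mem_compl_iff]
    omega
  have hms : MeasurableSet {ω | M.I w i ω = 1} := M.meas_I w i (measurableSet_singleton 1)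
  have hone : (1 : ENNReal) - ENNReal.ofReal (alpha s(M.pa w, w))
      = ENNReal.ofReal (1 - alpha s(M.pa w, w)) := by
    rw [← ENNReal.ofReal_one, ← ENNReal.ofReal_sub 1 ha0]
  rw [hcompl, prob_compl_eq_one_sub hms, M.I_bern w hw i, hone]

lemma MPMRF.binom_pmf {w : V} (hw : w ≠ M.root) (m j : ℕ) :
    (ℙ : Measure Ω) {ω | ∑ i ∈ Finset.range m, M.I w i ω = j}
      = ENNReal.ofReal (bp (alpha s(M.pa w, w)) m j) := by
  obtain ⟨ha0, ha1⟩ := M.alpha01 hw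
  induction m generalizing j with
  | zero =>
    rw [bp_zero_left]
    rcases eq_or_ne j 0 with rfl | hj
    · simp
    · simp [hj, Ne.symm hj]
  | succ m ihm =>
    have hP1 : ∀ (j' b : ℕ),
        (ℙ : Measure Ω) ({ω | ∑ i ∈ Finset.range m, M.I w i ω = j'} ∩ {ω | M.I w m ω = b})
        = ℙ {ω | ∑ i ∈ Finset.range m, M.I w i ω = j'} * ℙ {ω | M.I w m ω = b} := by
      intro j' b
      have hst : Disjoint (Sum.inr '' {p : V × ℕ | p.1 = w ∧ p.2 < m} : Set (V ⊕ V × ℕ))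
          ({Sum.inr (w, m)} : Set (V ⊕ V × ℕ)) := by
        rw [Set.disjoint_singleton_right]
        rintro ⟨p, ⟨-, hp2⟩, hpe⟩
        rw [Sum.inr.injEq] at hpe
        rw [hpe] at hp2
        omega
      have hA : MeasurableSet[⨆ j ∈ (Sum.inr '' {p : V × ℕ | p.1 = w ∧ p.2 < m} :
          Set (V ⊕ V × ℕ)), MeasurableSpace.comap (M.X j) ⊤]
          ((fun ω => ∑ i ∈ Finset.range m, M.I w i ω) ⁻¹' {j'}) := by
        have hmeas : Measurable[⨆ j ∈ (Sum.inr '' {p : V × ℕ | p.1 = w ∧ p.2 < m} :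
            Set (V ⊕ V × ℕ)), MeasurableSpace.comap (M.X j) ⊤]
            (fun ω => ∑ i ∈ Finset.range m, M.I w i ω) :=
          Finset.measurable_sum _ (fun i hi =>
            M.measI_biSup ⟨(w, i), ⟨rfl, Finset.mem_range.mp hi⟩, rfl⟩)
        exact hmeas (measurableSet_singleton j')
      have hB : MeasurableSet[⨆ j ∈ ({Sum.inr (w, m)} : Set (V ⊕ V × ℕ)),
          MeasurableSpace.comap (M.X j) ⊤] (M.I w m ⁻¹' {b}) := by
        have h1 : Measurable[⨆ j ∈ ({Sum.inr (w, m)} : Set (V ⊕ V × ℕ)),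
            MeasurableSpace.comap (M.X j) ⊤] (M.I w m) :=
          M.measI_biSup rfl
        exact h1 (measurableSet_singleton b)
      exact blocks_indep M.measX M.indepX hst hA hB
    have hImeas : ∀ b : ℕ, MeasurableSet {ω | M.I w m ω = b} :=
      fun b => M.meas_I w m (measurableSet_singleton b)
    have hSmeas : ∀ j' : ℕ, MeasurableSet {ω | ∑ i ∈ Finset.range m, M.I w i ω = j'} :=
      fun j' => (Finset.measurable_sum _ (fun i _ => M.meas_I w i)) (measurableSet_singleton j')
    cases j with
    | zero =>
      have hsplit : {ω | ∑ i ∈ Finset.range (m+1), M.I w i ω = 0}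
          = {ω | ∑ i ∈ Finset.range m, M.I w i ω = 0} ∩ {ω | M.I w m ω = 0} := by
        ext ω
        simp only [Set.mem_setOf_eq, Finset.sum_range_succ, Set.mem_inter_iff]
        omega
      rw [hsplit, hP1 0 0, ihm 0, M.I_zero_pmf hw m,
        ← ENNReal.ofReal_mul (bp_nonneg ha0 ha1 m 0)]
      congr 1
      rw [bp_succ]
      simp
    | succ k =>
      have hsplit : {ω | ∑ i ∈ Finset.range (m+1), M.I w i ω = k+1}
          = ({ω | ∑ i ∈ Finset.range m, M.I w i ω = k+1} ∩ {ω | M.I w m ω = 0})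
            ∪ ({ω | ∑ i ∈ Finset.range m, M.I w i ω = k} ∩ {ω | M.I w m ω = 1}) := by
        ext ω
        have := M.I_le_one w m ω
        simp only [Set.mem_setOf_eq, Finset.sum_range_succ, Set.mem_union, Set.mem_inter_iff]
        omega
      have hdisj : Disjoint
          ({ω | ∑ i ∈ Finset.range m, M.I w i ω = k+1} ∩ {ω | M.I w m ω = 0})
          ({ω | ∑ i ∈ Finset.range m, M.I w i ω = k} ∩ {ω | M.I w m ω = 1}) := by
        rw [Set.disjoint_left]
        rintro ω ⟨-, h0⟩ ⟨-, h1⟩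
        rw [Set.mem_setOf_eq] at h0 h1
        omega
      rw [hsplit, measure_union hdisj ((hSmeas k).inter (hImeas 1)), hP1 (k+1) 0, hP1 k 1,
        ihm (k+1), ihm k, M.I_zero_pmf hw m, M.I_bern w hw m,
        ← ENNReal.ofReal_mul (bp_nonneg ha0 ha1 m (k+1)),
        ← ENNReal.ofReal_mul (bp_nonneg ha0 ha1 m k),
        ← ENNReal.ofReal_add (mul_nonneg (bp_nonneg ha0 ha1 m (k+1)) (by linarith)) (mul_nonneg (bp_nonneg ha0 ha1 m k) ha0)]
      congr 1
      rw [bp_succ]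
      simp only [Nat.succ_ne_zero, if_false, Nat.add_sub_cancel]
      ring

lemma MPMRF.thin_pmf {w : V} (hw : w ≠ M.root) (m k : ℕ) :
    (ℙ : Measure Ω) {ω | (∑ i ∈ Finset.range m, M.I w i ω) + M.L w ω = k}
      = ENNReal.ofReal
          (thinKer (alpha s(M.pa w, w)) (lam * (1 - alpha s(M.pa w, w))) m k) := by
  obtain ⟨ha0, ha1⟩ := M.alpha01 hw
  have hunion : {ω | (∑ i ∈ Finset.range m, M.I w i ω) + M.L w ω = k}
      = ⋃ j ∈ Finset.range (k+1),
          ({ω | ∑ i ∈ Finset.range m, M.I w i ω = j} ∩ {ω | M.L w ω = k - j}) := by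
    ext ω
    simp only [Set.mem_setOf_eq, Set.mem_iUnion, Finset.mem_range, Set.mem_inter_iff]
    constructor
    · intro h
      exact ⟨∑ i ∈ Finset.range m, M.I w i ω, by omega, rfl, by omega⟩
    · rintro ⟨j, hj, h1, h2⟩
      omega
  have hSmeas : ∀ j' : ℕ, MeasurableSet {ω | ∑ i ∈ Finset.range m, M.I w i ω = j'} :=
    fun j' => (Finset.measurable_sum _ (fun i _ => M.meas_I w i)) (measurableSet_singleton j')
  have hLmeas : ∀ l : ℕ, MeasurableSet {ω | M.L w ω = l} :=
    fun l => M.meas_L w (measurableSet_singleton l)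
  have hpd : Set.PairwiseDisjoint ↑(Finset.range (k+1)) (fun j =>
      ({ω | ∑ i ∈ Finset.range m, M.I w i ω = j} ∩ {ω | M.L w ω = k - j} : Set Ω)) := by
    intro j₁ hj₁ j₂ hj₂ hne
    simp only [Function.onFun]
    rw [Set.disjoint_left]
    rintro ω ⟨h1, -⟩ ⟨h2, -⟩
    rw [Set.mem_setOf_eq] at h1 h2
    exact hne (by omega)
  rw [hunion, measure_biUnion_finset hpd (fun j _ => (hSmeas j).inter (hLmeas (k - j)))]
  have hterm : ∀ j ∈ Finset.range (k+1),
      (ℙ : Measure Ω) ({ω | ∑ i ∈ Finset.range m, M.I w i ω = j} ∩ {ω | M.L w ω = k - j})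
      = ENNReal.ofReal (bp (alpha s(M.pa w, w)) m j *
          poissonProb (lam * (1 - alpha s(M.pa w, w))) (k - j)) := by
    intro j hj
    have hst : Disjoint (Sum.inr '' {p : V × ℕ | p.1 = w} : Set (V ⊕ V × ℕ))
        ({Sum.inl w} : Set (V ⊕ V × ℕ)) := by
      rw [Set.disjoint_singleton_right]
      rintro ⟨p, -, hpe⟩
      exact absurd hpe (by simp)
    have hA : MeasurableSet[⨆ j ∈ (Sum.inr '' {p : V × ℕ | p.1 = w} :
        Set (V ⊕ V × ℕ)), MeasurableSpace.comap (M.X j) ⊤]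
        ((fun ω => ∑ i ∈ Finset.range m, M.I w i ω) ⁻¹' {j}) := by
      have hmeas : Measurable[⨆ j ∈ (Sum.inr '' {p : V × ℕ | p.1 = w} :
          Set (V ⊕ V × ℕ)), MeasurableSpace.comap (M.X j) ⊤]
          (fun ω => ∑ i ∈ Finset.range m, M.I w i ω) :=
        Finset.measurable_sum _ (fun i hi => M.measI_biSup ⟨(w, i), rfl, rfl⟩)
      exact hmeas (measurableSet_singleton j)
    have hB : MeasurableSet[⨆ j ∈ ({Sum.inl w} : Set (V ⊕ V × ℕ)),
        MeasurableSpace.comap (M.X j) ⊤] (M.L w ⁻¹' {k - j}) := by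
      have h1 : Measurable[⨆ j ∈ ({Sum.inl w} : Set (V ⊕ V × ℕ)),
          MeasurableSpace.comap (M.X j) ⊤] (M.L w) :=
        M.measL_biSup rfl
      exact h1 (measurableSet_singleton (k - j))
    have hblk : (ℙ : Measure Ω)
        ({ω | ∑ i ∈ Finset.range m, M.I w i ω = j} ∩ {ω | M.L w ω = k - j})
        = ℙ {ω | ∑ i ∈ Finset.range m, M.I w i ω = j} * ℙ {ω | M.L w ω = k - j} :=
      blocks_indep M.measX M.indepX hst hA hB
    rw [hblk, M.binom_pmf hw m j,
      M.L_poisson w hw (k - j), ← ENNReal.ofReal_mul (bp_nonneg ha0 ha1 m j)]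
  rw [Finset.sum_congr rfl hterm, ← ENNReal.ofReal_sum_of_nonneg
    (fun j _ => mul_nonneg (bp_nonneg ha0 ha1 m j)
      (poissonProb_nonneg (by nlinarith [M.lam_pos]) _))]
  rfl

lemma MPMRF.rootedVal_nonneg (f : V → ℕ) (Q : Finset V) (hQ : ∀ v ∈ Q, v ≠ M.root) :
    0 ≤ poissonProb lam (f M.root) * ∏ v ∈ Q,
      thinKer (alpha s(M.pa v, v)) (lam * (1 - alpha s(M.pa v, v))) (f (M.pa v)) (f v) := by
  apply mul_nonneg (poissonProb_nonneg M.lam_pos.le _)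
  apply Finset.prod_nonneg
  intro v hv
  obtain ⟨ha0, ha1⟩ := M.alpha01 (hQ v hv)
  exact thinKer_nonneg ha0 ha1 (by nlinarith [M.lam_pos]) _ _

lemma MPMRF.joint_pmf (f : V → ℕ) :
    ∀ (n : ℕ) (S : Finset V), S.card = n → M.root ∈ S →
      (∀ u ∈ S, u ≠ M.root → M.pa u ∈ S) →
      (ℙ : Measure Ω) (⋂ v ∈ S, {ω | M.N v ω = f v})
        = ENNReal.ofReal (poissonProb lam (f M.root) *
            ∏ v ∈ S.erase M.root, thinKer (alpha s(M.pa v, v))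
              (lam * (1 - alpha s(M.pa v, v))) (f (M.pa v)) (f v)) := by
  intro n
  induction n using Nat.strong_induction_on with
  | _ n ih =>
    intro S hcard hroot hcl
    rcases eq_or_ne (S.erase M.root) ∅ with her | her
    · have hS : S = {M.root} := by
        apply Finset.eq_singleton_iff_unique_mem.mpr
        refine ⟨hroot, fun x hx => ?_⟩
        by_contra hxr
        exact (Finset.notMem_empty x) (her ▸ Finset.mem_erase.mpr ⟨hxr, hx⟩)
      rw [her, hS, Finset.prod_empty, mul_one]
      have hset : (⋂ v ∈ ({M.root} : Finset V), {ω | M.N v ω = f v})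
          = {ω | M.L M.root ω = f M.root} := by
        rw [← M.N_root]
        ext ω
        simp
      rw [hset]
      exact M.L_root_poisson (f M.root)
    · obtain ⟨w, hwS, hwmax⟩ := Finset.exists_max_image (S.erase M.root)
        (fun v => G.dist M.root v) (Finset.nonempty_iff_ne_empty.mpr her)
      have hwS' : w ∈ S := Finset.mem_of_mem_erase hwS
      have hwr : w ≠ M.root := Finset.ne_of_mem_erase hwS
      set T := S.erase w with hT
      have hpawT : M.pa w ∈ T := by
        have hpaS := hcl w hwS' hwr
        have hpane : M.pa w ≠ w := by
          have := M.pa_dist w hwr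
          intro he
          rw [he] at this
          omega
        exact Finset.mem_erase.mpr ⟨hpane, hpaS⟩
      have hrootT : M.root ∈ T := Finset.mem_erase.mpr ⟨Ne.symm hwr, hroot⟩
      have hclT : ∀ u ∈ T, u ≠ M.root → M.pa u ∈ T := by
        intro u huT hur
        have huS := Finset.mem_of_mem_erase huT
        refine Finset.mem_erase.mpr ⟨?_, hcl u huS hur⟩
        intro hpu
        have hd := M.pa_dist u hur
        rw [hpu] at hd
        have hle := hwmax u (Finset.mem_erase.mpr ⟨hur, huS⟩)
        have hwT : u ≠ w := Finset.ne_of_mem_erase huT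
        omega
      have hclT' : ∀ u ∈ (↑T : Set V), u ≠ M.root → M.pa u ∈ (↑T : Set V) := by
        intro u hu hur
        exact Finset.mem_coe.mpr (hclT u (Finset.mem_coe.mp hu) hur)
      have hev : (⋂ v ∈ S, {ω | M.N v ω = f v})
          = (⋂ v ∈ T, {ω | M.N v ω = f v})
            ∩ {ω | (∑ i ∈ Finset.range (f (M.pa w)), M.I w i ω) + M.L w ω = f w} := by
        ext ω
        simp only [Set.mem_inter_iff, Set.mem_iInter, Set.mem_setOf_eq]
        constructor
        · intro h
          refine ⟨fun v hv => h v (Finset.mem_of_mem_erase hv), ?_⟩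
          have hNw := h w hwS'
          have hpa := h (M.pa w) (Finset.mem_of_mem_erase hpawT)
          rw [M.N_rec w hwr ω, hpa] at hNw
          exact hNw
        · rintro ⟨h1, h2⟩ v hv
          rcases eq_or_ne v w with rfl | hvw
          · rw [M.N_rec v hwr ω, h1 (M.pa v) hpawT]
            exact h2
          · exact h1 v (Finset.mem_erase.mpr ⟨hvw, hv⟩)
      have hblock : (ℙ : Measure Ω) ((⋂ v ∈ T, {ω | M.N v ω = f v})
            ∩ {ω | (∑ i ∈ Finset.range (f (M.pa w)), M.I w i ω) + M.L w ω = f w})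
          = ℙ (⋂ v ∈ T, {ω | M.N v ω = f v})
            * ℙ {ω | (∑ i ∈ Finset.range (f (M.pa w)), M.I w i ω) + M.L w ω = f w} := by
        have hst : Disjoint (Jset (↑T) : Set (V ⊕ V × ℕ))
            (({Sum.inl w} ∪ Sum.inr '' {p : V × ℕ | p.1 = w}) : Set (V ⊕ V × ℕ)) := by
          rw [Set.disjoint_left]
          rintro j (⟨u, hu, rfl⟩ | ⟨p, hp, rfl⟩) hjt
          · rcases hjt with hjt | ⟨q, -, hq⟩
            · rw [Set.mem_singleton_iff, Sum.inl.injEq] at hjt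
              rw [hjt] at hu
              exact Finset.ne_of_mem_erase (Finset.mem_coe.mp hu) rfl
            · exact absurd hq (by simp)
          · rcases hjt with hjt | ⟨q, hq1, hq2⟩
            · exact absurd hjt (by simp)
            · rw [Sum.inr.injEq] at hq2
              rw [Set.mem_setOf_eq] at hp hq1
              rw [hq2] at hq1
              rw [hq1] at hp
              exact Finset.ne_of_mem_erase (Finset.mem_coe.mp hp) rfl
        have hA : MeasurableSet[M.mJ (↑T)] (⋂ v ∈ T, M.N v ⁻¹' {f v}) := by
          refine MeasurableSet.iInter fun v => MeasurableSet.iInter fun hv => ?_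
          have hNv : Measurable[M.mJ (↑T)] (M.N v) :=
            M.measN_mJ hclT' (G.dist M.root v) v rfl (Finset.mem_coe.mpr hv)
          exact hNv (measurableSet_singleton (f v))
        have hB : MeasurableSet[⨆ j ∈ (({Sum.inl w} ∪ Sum.inr '' {p : V × ℕ | p.1 = w}) :
            Set (V ⊕ V × ℕ)), MeasurableSpace.comap (M.X j) ⊤]
            ((fun ω => (∑ i ∈ Finset.range (f (M.pa w)), M.I w i ω) + M.L w ω) ⁻¹' {f w}) := by
          have hmeas : Measurable[⨆ j ∈ (({Sum.inl w} ∪ Sum.inr '' {p : V × ℕ | p.1 = w}) :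
              Set (V ⊕ V × ℕ)), MeasurableSpace.comap (M.X j) ⊤]
              (fun ω => (∑ i ∈ Finset.range (f (M.pa w)), M.I w i ω) + M.L w ω) := by
            apply Measurable.add
            · exact Finset.measurable_sum _
                (fun i hi => M.measI_biSup (Or.inr ⟨(w, i), rfl, rfl⟩))
            · exact M.measL_biSup (Or.inl rfl)
          exact hmeas (measurableSet_singleton (f w))
        exact blocks_indep M.measX M.indepX hst hA hB
      have hTcard : T.card < n := by
        rw [hT, Finset.card_erase_of_mem hwS']
        have : 0 < S.card := Finset.card_pos.mpr ⟨M.root, hroot⟩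
        omega
      rw [hev, hblock, ih T.card hTcard T rfl hrootT hclT, M.thin_pmf hwr,
        ← ENNReal.ofReal_mul (M.rootedVal_nonneg f (T.erase M.root)
          (fun v hv => Finset.ne_of_mem_erase hv))]
      congr 1
      have hSe : S.erase M.root = insert w (T.erase M.root) := by
        rw [hT, Finset.erase_right_comm]
        exact (Finset.insert_erase hwS).symm
      have hwnT : w ∉ T.erase M.root := fun hcon =>
        Finset.ne_of_mem_erase (Finset.mem_of_mem_erase hcon) rfl
      rw [hSe, Finset.prod_insert hwnT]
      ring

lemma MPMRF.joint_pmf_univ (f : V → ℕ) :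
    (ℙ : Measure Ω) {ω | (fun v => M.N v ω) = f}
      = ENNReal.ofReal (poissonProb lam (f M.root) *
          ∏ v ∈ Finset.univ.erase M.root, thinKer (alpha s(M.pa v, v))
            (lam * (1 - alpha s(M.pa v, v))) (f (M.pa v)) (f v)) := by
  have hset : {ω | (fun v => M.N v ω) = f}
      = ⋂ v ∈ (Finset.univ : Finset V), {ω | M.N v ω = f v} := by
    ext ω
    simp [funext_iff]
  rw [hset]
  exact M.joint_pmf f Finset.univ.card Finset.univ rfl (Finset.mem_univ _)
    (fun u _ _ => Finset.mem_univ _)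

end MLemmas

/-- The choice of the root has no stochastic incidence: two MPMRF
constructions on the same tree `G`, with the same `lam` and the same dependence
parameters `alpha`, but rooted at different roots, yield the same joint distribution
on `ℕ^V`. -/
theorem mpmrf_root_invariance {V : Type} [Fintype V] [DecidableEq V]
    (G : SimpleGraph V) (lam : ℝ) (alpha : Sym2 V → ℝ)
    (Ω Ω' : Type) [MeasureSpace Ω] [MeasureSpace Ω']
    [IsProbabilityMeasure (ℙ : Measure Ω)] [IsProbabilityMeasure (ℙ : Measure Ω')]
    (M : MPMRF G lam alpha Ω) (M' : MPMRF G lam alpha Ω')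
    (hroot : M.root ≠ M'.root) :
    Measure.map (fun ω => fun v : V => M.N v ω) (ℙ : Measure Ω)
      = Measure.map (fun ω => fun v : V => M'.N v ω) (ℙ : Measure Ω') := by
  classical
  haveI instE : Fintype G.edgeSet := (Set.toFinite _).fintype
  have hmeasmap : Measurable (fun ω => fun v : V => M.N v ω) :=
    measurable_pi_lambda _ (fun v => M.meas_N v)
  have hmeasmap' : Measurable (fun ω => fun v : V => M'.N v ω) :=
    measurable_pi_lambda _ (fun v => M'.meas_N v)
  apply Measure.ext_iff_singleton.mpr
  intro f
  rw [Measure.map_apply hmeasmap (measurableSet_singleton f),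
    Measure.map_apply hmeasmap' (measurableSet_singleton f)]
  have hpre : (fun ω => fun v : V => M.N v ω) ⁻¹' {f} = {ω | (fun v => M.N v ω) = f} := rfl
  have hpre' : (fun ω => fun v : V => M'.N v ω) ⁻¹' {f} = {ω | (fun v => M'.N v ω) = f} := rfl
  rw [hpre, hpre', M.joint_pmf_univ f, M'.joint_pmf_univ f]
  congr 1
  have hPP : ∀ e : Sym2 V, 0 < PPfun lam f e := by
    intro e
    induction e with
    | _ u v =>
      have he : PPfun lam f s(u, v) = poissonProb lam (f u) * poissonProb lam (f v) := rfl
      rw [he]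
      exact mul_pos (poissonProb_pos M.lam_pos _) (poissonProb_pos M.lam_pos _)
  have hPPprod : ∏ e ∈ G.edgeFinset, PPfun lam f e ≠ 0 :=
    (Finset.prod_pos (fun e _ => hPP e)).ne'
  have h1 := rooted_eq_rootfree M.isTree lam alpha M.root M.pa M.pa_adj M.pa_dist f
  have h2 := rooted_eq_rootfree M'.isTree lam alpha M'.root M'.pa M'.pa_adj M'.pa_dist f
  exact mul_right_cancel₀ hPPprod (h1.trans h2.symm)
end

section
/- Joint pmf: let N ~ MPMRF(λ, α, T) and choose any root r ∈ V. Then for every x = (x_v)_{v∈V} ∈ ℕ^V, Pr(∩_{v∈V}{N_v = x_v}) = (e^{−λ} λ^{x_r} / x_r!) · ∏_{v∈V\{r}} Σ_{k=0}^{min(x_{pa(v)}, x_v)} [ e^{−λ(1−α_{(pa(v),v)})} (λ(1−α_{(pa(v),v)}))^{x_v−k} / (x_v−k)! ] · C(x_{pa(v)}, k) · α_{(pa(v),v)}^k (1−α_{(pa(v),v)})^{x_{pa(v)}−k}, where C(n,k) denotes the binomial coefficient. -/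
open MeasureTheory ProbabilityTheory
open scoped ProbabilityTheory

set_option linter.unusedSectionVars false
set_option linter.unusedVariables false

section Aux

lemma measurable_sum_range {Ω : Type} {m : MeasurableSpace Ω} {g : Ω → ℕ} {h : ℕ → Ω → ℕ}
    (hg : Measurable[m] g) (hh : ∀ i, Measurable[m] (h i)) :
    Measurable[m] (fun ω => ∑ i ∈ Finset.range (g ω), h i ω) := by
  apply measurable_to_countable'
  intro n
  have : (fun ω => ∑ i ∈ Finset.range (g ω), h i ω) ⁻¹' {n}
      = ⋃ j : ℕ, (g ⁻¹' {j}) ∩ {ω | ∑ i ∈ Finset.range j, h i ω = n} := by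
    ext ω
    simp only [Set.mem_preimage, Set.mem_singleton_iff, Set.mem_iUnion, Set.mem_inter_iff,
      Set.mem_setOf_eq]
    exact ⟨fun hn => ⟨g ω, rfl, hn⟩, fun ⟨j, hj, hn⟩ => by rw [hj]; exact hn⟩
  rw [this]
  refine MeasurableSet.iUnion fun j => (hg (measurableSet_singleton j)).inter ?_
  exact (Finset.measurable_sum _ (fun i _ => hh i)) (measurableSet_singleton n)

variable {V : Type} [Fintype V] [DecidableEq V]
    {G : SimpleGraph V} {lam : ℝ} {alpha : Sym2 V → ℝ}
    {Ω : Type} [MeasureSpace Ω] [IsProbabilityMeasure (ℙ : Measure Ω)]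
    (M : MPMRF G lam alpha Ω)

/-- the combined family of innovations and indicators -/
def MPMRF.Fam : (V ⊕ V × ℕ) → Ω → ℕ := Sum.elim M.L (fun p => M.I p.1 p.2)

lemma MPMRF.meas_Fam : ∀ i, Measurable (M.Fam i) := by
  rintro (v | ⟨v, i⟩)
  · exact M.meas_L v
  · exact M.meas_I v i

/-- sigma algebra generated by a set of the variables -/
def MPMRF.mS (S : Set (V ⊕ V × ℕ)) : MeasurableSpace Ω :=
  ⨆ i ∈ S, MeasurableSpace.comap (M.Fam i) ⊤

lemma MPMRF.mS_le (S : Set (V ⊕ V × ℕ)) : M.mS S ≤ ‹MeasureSpace Ω›.toMeasurableSpace :=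
  iSup₂_le fun i _ => (M.meas_Fam i).comap_le

lemma MPMRF.meas_mS {S : Set (V ⊕ V × ℕ)} {i : V ⊕ V × ℕ} (hi : i ∈ S) :
    Measurable[M.mS S] (M.Fam i) :=
  (comap_measurable (M.Fam i)).mono (le_iSup₂ (f := fun i _ =>
    MeasurableSpace.comap (M.Fam i) ⊤) i hi) le_rfl

lemma MPMRF.meas_mS_L {S : Set (V ⊕ V × ℕ)} {v : V} (hv : Sum.inl v ∈ S) :
    Measurable[M.mS S] (M.L v) := M.meas_mS hv

lemma MPMRF.meas_mS_I {S : Set (V ⊕ V × ℕ)} {v : V} {i : ℕ} (hv : Sum.inr (v, i) ∈ S) :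
    Measurable[M.mS S] (M.I v i) := M.meas_mS hv

lemma MPMRF.indep_pair {S T : Set (V ⊕ V × ℕ)} (hST : Disjoint S T) {A B : Set Ω}
    (hA : MeasurableSet[M.mS S] A) (hB : MeasurableSet[M.mS T] B) :
    ℙ (A ∩ B) = ℙ A * ℙ B := by
  have h := indep_iSup_of_disjoint (fun i => (M.meas_Fam i).comap_le) M.indep.iIndep hST
  exact (Indep_iff _ _ _).1 h A B hA hB

/-- indices associated with a set of vertices -/
def vIdx (U : Finset V) : Set (V ⊕ V × ℕ) :=
  {i | Sum.elim (· ∈ U) (fun p => p.1 ∈ U) i}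

lemma vIdx_disjoint {U U' : Finset V} (h : Disjoint U U') : Disjoint (vIdx U) (vIdx U') := by
  rw [Set.disjoint_left]
  rintro (v | ⟨v, i⟩) hv hv'
  · exact (Finset.disjoint_left.1 h) hv hv'
  · exact (Finset.disjoint_left.1 h) hv hv'

lemma MPMRF.meas_N_anc_s4 (U : Finset V) (hU : ∀ u ∈ U, u ≠ M.root → M.pa u ∈ U) :
    ∀ (d : ℕ) (u : V), G.dist M.root u ≤ d → u ∈ U → Measurable[M.mS (vIdx U)] (M.N u) := by
  intro d
  induction d with
  | zero =>
    intro u hd hu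
    have hroot : u = M.root :=
      ((M.isTree.isConnected.dist_eq_zero_iff (u := M.root) (v := u)).1 (Nat.le_zero.1 hd)).symm
    subst hroot
    rw [M.N_root]
    exact M.meas_mS_L (by simpa [vIdx] using hu)
  | succ d ih =>
    intro u hd hu
    by_cases hr : u = M.root
    · subst hr
      rw [M.N_root]
      exact M.meas_mS_L (by simpa [vIdx] using hu)
    · have hpa : M.pa u ∈ U := hU u hu hr
      have hdist : G.dist M.root (M.pa u) ≤ d := by
        have := M.pa_dist u hr; omega
      have hNpa := ih (M.pa u) hdist hpa
      have : M.N u = fun ω => (∑ i ∈ Finset.range (M.N (M.pa u) ω), M.I u i ω) + M.L u ω :=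
        funext (M.N_rec u hr)
      rw [this]
      exact (measurable_sum_range hNpa (fun i => M.meas_mS_I (by simpa [vIdx] using hu))).add
        (M.meas_mS_L (by simpa [vIdx] using hu))


lemma binom_rec (a : ℝ) (n k : ℕ) :
    (n.choose (k + 1) : ℝ) * a ^ (k + 1) * (1 - a) ^ (n - (k + 1)) * (1 - a)
      + (n.choose k : ℝ) * a ^ k * (1 - a) ^ (n - k) * a
      = ((n + 1).choose (k + 1) : ℝ) * a ^ (k + 1) * (1 - a) ^ (n + 1 - (k + 1)) := by
  rw [Nat.succ_sub_succ]
  rcases le_or_gt (k + 1) n with h | h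
  · have h1 : n - k = (n - (k + 1)) + 1 := by omega
    rw [h1, Nat.choose_succ_succ]
    push_cast
    ring
  · rcases Nat.lt_or_ge k n with h2 | h2
    · omega
    rcases Nat.eq_or_lt_of_le h2 with h3 | h3
    · subst h3
      simp [Nat.choose_eq_zero_of_lt h, Nat.choose_self, Nat.sub_self, pow_succ]
    · simp [Nat.choose_eq_zero_of_lt h, Nat.choose_eq_zero_of_lt h3,
        Nat.choose_eq_zero_of_lt (by omega : n + 1 < k + 1)]

lemma MPMRF.alpha_Icc {v : V} (hv : v ≠ M.root) : alpha s(M.pa v, v) ∈ Set.Icc (0 : ℝ) 1 :=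
  M.alpha_mem _ (G.mem_edgeSet.2 (M.pa_adj v hv))

lemma MPMRF.I_zero {v : V} (hv : v ≠ M.root) (i : ℕ) :
    ℙ {ω | M.I v i ω = 0} = ENNReal.ofReal (1 - alpha s(M.pa v, v)) := by
  have hset : {ω | M.I v i ω = 0} = {ω | M.I v i ω = 1}ᶜ := by
    ext ω; have := M.I_le_one v i ω
    simp only [Set.mem_setOf_eq, Set.mem_compl_iff]; omega
  have hmeas : MeasurableSet {ω | M.I v i ω = 1} := (M.meas_I v i) (measurableSet_singleton 1)
  rw [hset, prob_compl_eq_one_sub hmeas, M.I_bern v hv i,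
    ENNReal.ofReal_sub _ (M.alpha_Icc hv).1, ENNReal.ofReal_one]

lemma MPMRF.measSet_binsum {v : V} (n j : ℕ) {S : Set (V ⊕ V × ℕ)}
    (hS : ∀ i < n, Sum.inr (v, i) ∈ S) :
    MeasurableSet[M.mS S] {ω | ∑ i ∈ Finset.range n, M.I v i ω = j} := by
  have : Measurable[M.mS S] (fun ω => ∑ i ∈ Finset.range n, M.I v i ω) :=
    Finset.measurable_sum _ (fun i hi => M.meas_mS_I (hS i (Finset.mem_range.1 hi)))
  exact this (measurableSet_singleton j)

lemma MPMRF.binom {v : V} (hv : v ≠ M.root) (n k : ℕ) :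
    ℙ {ω | ∑ i ∈ Finset.range n, M.I v i ω = k}
      = ENNReal.ofReal ((n.choose k : ℝ) * (alpha s(M.pa v, v)) ^ k
          * (1 - alpha s(M.pa v, v)) ^ (n - k)) := by
  obtain ⟨h0, h1⟩ := M.alpha_Icc hv
  set a := alpha s(M.pa v, v) with ha
  have h2 : (0 : ℝ) ≤ 1 - a := by linarith
  have hb_nonneg : ∀ m j : ℕ, 0 ≤ (m.choose j : ℝ) * a ^ j * (1 - a) ^ (m - j) :=
    fun m j => by positivity
  induction n generalizing k with
  | zero =>
    rcases k with _ | k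
    · have : {ω : Ω | ∑ i ∈ Finset.range 0, M.I v i ω = 0} = Set.univ := by
        ext ω; simp
      rw [this]; simp
    · have : {ω : Ω | ∑ i ∈ Finset.range 0, M.I v i ω = k + 1} = ∅ := by
        ext ω; simp
      rw [this]; simp [Nat.choose_eq_zero_of_lt (Nat.succ_pos k)]
  | succ n ih =>
    have hdisj : Disjoint {i : V ⊕ V × ℕ | ∃ j < n, i = Sum.inr (v, j)}
        ({Sum.inr (v, n)} : Set (V ⊕ V × ℕ)) := by
      rw [Set.disjoint_right]
      rintro i rfl ⟨j, hj, hij⟩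
      simp only [Sum.inr.injEq, Prod.mk.injEq] at hij
      omega
    have hSmem : ∀ i < n, Sum.inr (v, i) ∈ {i : V ⊕ V × ℕ | ∃ j < n, i = Sum.inr (v, j)} :=
      fun i hi => ⟨i, hi, rfl⟩
    have hImeas : ∀ b : ℕ, MeasurableSet[M.mS ({Sum.inr (v, n)} : Set (V ⊕ V × ℕ))]
        {ω | M.I v n ω = b} := fun b =>
      (M.meas_mS_I (S := ({Sum.inr (v, n)} : Set (V ⊕ V × ℕ))) rfl) (measurableSet_singleton b)
    have key : ∀ j b : ℕ, ℙ ({ω | ∑ i ∈ Finset.range n, M.I v i ω = j} ∩ {ω | M.I v n ω = b})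
        = ℙ {ω | ∑ i ∈ Finset.range n, M.I v i ω = j} * ℙ {ω | M.I v n ω = b} :=
      fun j b => M.indep_pair hdisj (M.measSet_binsum n j hSmem) (hImeas b)
    rcases k with _ | k
    · have hset : {ω : Ω | ∑ i ∈ Finset.range (n + 1), M.I v i ω = 0}
          = {ω | ∑ i ∈ Finset.range n, M.I v i ω = 0} ∩ {ω | M.I v n ω = 0} := by
        ext ω
        simp only [Set.mem_setOf_eq, Set.mem_inter_iff, Finset.sum_range_succ]
        omega
      rw [hset, key 0 0, ih 0, M.I_zero hv n, ← ENNReal.ofReal_mul (hb_nonneg n 0)]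
      congr 1
      simp [pow_succ]
      exact Or.inl ha.symm
    · have hset : {ω : Ω | ∑ i ∈ Finset.range (n + 1), M.I v i ω = k + 1}
          = ({ω | ∑ i ∈ Finset.range n, M.I v i ω = k + 1} ∩ {ω | M.I v n ω = 0})
            ∪ ({ω | ∑ i ∈ Finset.range n, M.I v i ω = k} ∩ {ω | M.I v n ω = 1}) := by
        ext ω
        have := M.I_le_one v n ω
        simp only [Set.mem_setOf_eq, Set.mem_union, Set.mem_inter_iff, Finset.sum_range_succ]
        omega
      have hdisj2 : Disjoint ({ω : Ω | ∑ i ∈ Finset.range n, M.I v i ω = k + 1} ∩ {ω | M.I v n ω = 0})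
          ({ω | ∑ i ∈ Finset.range n, M.I v i ω = k} ∩ {ω | M.I v n ω = 1}) := by
        rw [Set.disjoint_left]
        rintro ω ⟨_, h2⟩ ⟨_, h4⟩
        simp only [Set.mem_setOf_eq] at h2 h4
        omega
      have hmeas2 : MeasurableSet ({ω : Ω | ∑ i ∈ Finset.range n, M.I v i ω = k} ∩ {ω | M.I v n ω = 1}) :=
        MeasurableSet.inter
          (((Finset.measurable_sum _ (fun i _ => M.meas_I v i))) (measurableSet_singleton k))
          ((M.meas_I v n) (measurableSet_singleton 1))
      rw [hset, measure_union hdisj2 hmeas2, key (k + 1) 0, key k 1,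
        ih (k + 1), ih k, M.I_zero hv n, M.I_bern v hv n,
        ← ENNReal.ofReal_mul (hb_nonneg n (k + 1)), ← ENNReal.ofReal_mul (hb_nonneg n k),
        ← ENNReal.ofReal_add (mul_nonneg (hb_nonneg n (k + 1)) h2)
          (mul_nonneg (hb_nonneg n k) h0)]
      congr 1
      exact binom_rec a n k

lemma MPMRF.bin_pois {v : V} (hv : v ≠ M.root) (n k m : ℕ) :
    ℙ ({ω | ∑ i ∈ Finset.range n, M.I v i ω = k} ∩ {ω | M.L v ω = m})
      = ℙ {ω | ∑ i ∈ Finset.range n, M.I v i ω = k} * ℙ {ω | M.L v ω = m} := by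
  have hdisj : Disjoint {i : V ⊕ V × ℕ | ∃ j, i = Sum.inr (v, j)}
      ({Sum.inl v} : Set (V ⊕ V × ℕ)) := by
    rw [Set.disjoint_right]
    rintro i rfl ⟨j, hij⟩
    exact absurd hij (by simp)
  exact M.indep_pair hdisj
    (M.measSet_binsum n k (fun i _ => ⟨i, rfl⟩))
    ((M.meas_mS_L (S := ({Sum.inl v} : Set (V ⊕ V × ℕ))) rfl) (measurableSet_singleton m))


/-- the convolution factor at a non-root vertex -/
noncomputable def conv (M : MPMRF G lam alpha Ω) (x : V → ℕ) (v : V) : ℝ :=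
  ∑ k ∈ Finset.range (min (x (M.pa v)) (x v) + 1),
    (Real.exp (-(lam * (1 - alpha s(M.pa v, v))))
        * (lam * (1 - alpha s(M.pa v, v))) ^ (x v - k)
        / (Nat.factorial (x v - k)))
      * ((x (M.pa v)).choose k)
      * (alpha s(M.pa v, v)) ^ k
      * (1 - alpha s(M.pa v, v)) ^ (x (M.pa v) - k)

lemma conv_nonneg (M : MPMRF G lam alpha Ω) (x : V → ℕ) {v : V} (hv : v ≠ M.root) :
    0 ≤ conv M x v := by
  obtain ⟨h0, h1⟩ := M.alpha_Icc hv
  have h2 : (0 : ℝ) ≤ 1 - alpha s(M.pa v, v) := by linarith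
  have hl := M.lam_pos.le
  refine Finset.sum_nonneg fun k _ => ?_
  have hla : (0 : ℝ) ≤ lam * (1 - alpha s(M.pa v, v)) := mul_nonneg hl h2
  positivity

lemma MPMRF.measSet_E_amb (S : Finset V) (x : V → ℕ) :
    MeasurableSet {ω : Ω | ∀ u ∈ S, M.N u ω = x u} := by
  have : {ω : Ω | ∀ u ∈ S, M.N u ω = x u} = ⋂ u ∈ S, {ω | M.N u ω = x u} := by
    ext ω; simp
  rw [this]
  exact Finset.measurableSet_biInter _ fun u _ => (M.meas_N u) (measurableSet_singleton (x u))

lemma MPMRF.measSet_E (S : Finset V) (hcl : ∀ u ∈ S, u ≠ M.root → M.pa u ∈ S) (x : V → ℕ) :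
    MeasurableSet[M.mS (vIdx S)] {ω : Ω | ∀ u ∈ S, M.N u ω = x u} := by
  have : {ω : Ω | ∀ u ∈ S, M.N u ω = x u} = ⋂ u ∈ S, {ω | M.N u ω = x u} := by
    ext ω; simp
  rw [this]
  exact Finset.measurableSet_biInter _ fun u hu =>
    (M.meas_N_anc_s4 S hcl (G.dist M.root u) u le_rfl hu) (measurableSet_singleton (x u))

lemma MPMRF.joint (x : V → ℕ) : ∀ (n : ℕ) (S : Finset V), S.card = n → M.root ∈ S →
    (∀ u ∈ S, u ≠ M.root → M.pa u ∈ S) →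
    ℙ {ω | ∀ u ∈ S, M.N u ω = x u}
      = ENNReal.ofReal ((Real.exp (-lam) * lam ^ (x M.root) / (Nat.factorial (x M.root)))
          * ∏ v ∈ S.erase M.root, conv M x v) := by
  intro n
  induction n with
  | zero =>
    intro S hcard hroot _
    rw [Finset.card_eq_zero] at hcard
    subst hcard
    simp at hroot
  | succ n ih =>
    intro S hcard hroot hcl
    by_cases hS : S = {M.root}
    · subst hS
      have hev : {ω : Ω | ∀ u ∈ ({M.root} : Finset V), M.N u ω = x u}
          = {ω | M.L M.root ω = x M.root} := by
        ext ω; simp [M.N_root]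
      rw [hev, M.L_root_poisson]
      simp [poissonProb]
    · -- pick a vertex of maximal distance from the root
      obtain ⟨u0, hu0S, hu0⟩ : ∃ u ∈ S, u ≠ M.root := by
        by_contra h
        push_neg at h
        exact hS (Finset.eq_singleton_iff_unique_mem.2 ⟨hroot, fun u hu => h u hu⟩)
      obtain ⟨v, hvS, hvmax⟩ := S.exists_max_image (fun u => G.dist M.root u) ⟨M.root, hroot⟩
      have hdist_u0 : 0 < G.dist M.root u0 :=
        Nat.pos_of_ne_zero fun h =>
          hu0 ((M.isTree.isConnected.dist_eq_zero_iff.1 h).symm)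
      have hv : v ≠ M.root := by
        intro h
        have h2 := hvmax u0 hu0S
        rw [h, SimpleGraph.dist_self] at h2
        omega
      set S' := S.erase v with hS'
      have hvS' : v ∉ S' := Finset.notMem_erase v S
      have hroot' : M.root ∈ S' := Finset.mem_erase.2 ⟨fun h => hv h.symm, hroot⟩
      have hcl' : ∀ u ∈ S', u ≠ M.root → M.pa u ∈ S' := by
        intro u hu hur
        have huS : u ∈ S := Finset.mem_of_mem_erase hu
        have hpauS : M.pa u ∈ S := hcl u huS hur
        refine Finset.mem_erase.2 ⟨fun h => ?_, hpauS⟩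
        have hd := M.pa_dist u hur
        rw [h] at hd
        have := hvmax u huS
        omega
      have hcard' : S'.card = n := by
        rw [hS', Finset.card_erase_of_mem hvS]
        omega
      have hpav : M.pa v ∈ S' := by
        have hpavS : M.pa v ∈ S := hcl v hvS hv
        refine Finset.mem_erase.2 ⟨fun h => ?_, hpavS⟩
        have hd := M.pa_dist v hv
        rw [h] at hd
        omega
      -- notation
      set xp := x (M.pa v) with hxp
      set xv := x v with hxv
      set a := alpha s(M.pa v, v) with ha
      obtain ⟨ha0, ha1⟩ := M.alpha_Icc hv
      have ha2 : (0 : ℝ) ≤ 1 - a := by linarith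
      -- event decomposition
      have hsplit : {ω : Ω | ∀ u ∈ S, M.N u ω = x u}
          = ⋃ k ∈ Finset.range (min xp xv + 1),
              ({ω | ∀ u ∈ S', M.N u ω = x u}
                ∩ ({ω | ∑ i ∈ Finset.range xp, M.I v i ω = k} ∩ {ω | M.L v ω = xv - k})) := by
        ext ω
        simp only [Set.mem_setOf_eq, Set.mem_iUnion, Set.mem_inter_iff, Finset.mem_range]
        constructor
        · intro h
          have hSp : ∀ u ∈ S', M.N u ω = x u := fun u hu => h u (Finset.mem_of_mem_erase hu)
          have hpa : M.N (M.pa v) ω = xp := hSp _ hpav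
          have hNv := M.N_rec v hv ω
          rw [hpa] at hNv
          have hkle : ∑ i ∈ Finset.range xp, M.I v i ω ≤ xp := by
            calc ∑ i ∈ Finset.range xp, M.I v i ω ≤ ∑ i ∈ Finset.range xp, 1 :=
                  Finset.sum_le_sum (fun i _ => M.I_le_one v i ω)
              _ = xp := by simp
          have hNvx : M.N v ω = xv := h v hvS
          exact ⟨∑ i ∈ Finset.range xp, M.I v i ω, by omega, hSp, rfl, by omega⟩
        · rintro ⟨k, hk, hSp, hbin, hL⟩
          intro u hu
          rcases eq_or_ne u v with rfl | huv
          · have hpa : M.N (M.pa u) ω = xp := hSp _ hpav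
            rw [M.N_rec u hv ω, hpa, hbin, hL]
            omega
          · exact hSp u (Finset.mem_erase.2 ⟨huv, hu⟩)
      -- measure of each piece
      have hBmeas : ∀ k : ℕ, MeasurableSet {ω : Ω | ∑ i ∈ Finset.range xp, M.I v i ω = k} :=
        fun k => (Finset.measurable_sum _ fun i _ => M.meas_I v i) (measurableSet_singleton k)
      have hCmeas : ∀ k : ℕ, MeasurableSet {ω : Ω | M.L v ω = xv - k} :=
        fun k => (M.meas_L v) (measurableSet_singleton (xv - k))
      have hpd : (↑(Finset.range (min xp xv + 1)) : Set ℕ).PairwiseDisjoint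
          (fun k => {ω : Ω | ∀ u ∈ S', M.N u ω = x u}
            ∩ ({ω | ∑ i ∈ Finset.range xp, M.I v i ω = k} ∩ {ω | M.L v ω = xv - k})) := by
        intro k _ k' _ hkk'
        refine Set.disjoint_left.2 ?_
        rintro ω ⟨_, hb, _⟩ ⟨_, hb', _⟩
        simp only [Set.mem_setOf_eq] at hb hb'
        exact hkk' (hb ▸ hb')
      have hpiece : ∀ k : ℕ,
          ℙ ({ω : Ω | ∀ u ∈ S', M.N u ω = x u}
            ∩ ({ω | ∑ i ∈ Finset.range xp, M.I v i ω = k} ∩ {ω | M.L v ω = xv - k}))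
          = ℙ {ω : Ω | ∀ u ∈ S', M.N u ω = x u}
            * (ENNReal.ofReal ((xp.choose k : ℝ) * a ^ k * (1 - a) ^ (xp - k))
              * ENNReal.ofReal (poissonProb (lam * (1 - a)) (xv - k))) := by
        intro k
        have hdisjST : Disjoint (vIdx S') (vIdx {v}) :=
          vIdx_disjoint (Finset.disjoint_singleton_right.2 hvS')
        have hBk : MeasurableSet[M.mS (vIdx ({v} : Finset V))]
            {ω : Ω | ∑ i ∈ Finset.range xp, M.I v i ω = k} :=
          M.measSet_binsum xp k (fun i _ => by simp [vIdx])
        have hCk : MeasurableSet[M.mS (vIdx ({v} : Finset V))] {ω : Ω | M.L v ω = xv - k} :=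
          (M.meas_mS_L (by simp [vIdx])) (measurableSet_singleton (xv - k))
        rw [M.indep_pair hdisjST (M.measSet_E S' hcl' x) (hBk.inter hCk),
          M.bin_pois hv xp k (xv - k), M.binom hv xp k, M.L_poisson v hv (xv - k)]
      -- put it together
      rw [hsplit, measure_biUnion_finset hpd
        (fun k _ => (M.measSet_E_amb S' x).inter ((hBmeas k).inter (hCmeas k)))]
      simp only [hpiece]
      rw [← Finset.mul_sum, ih S' hcard' hroot' hcl']
      have hterm : ∀ k : ℕ,
          ENNReal.ofReal ((xp.choose k : ℝ) * a ^ k * (1 - a) ^ (xp - k))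
            * ENNReal.ofReal (poissonProb (lam * (1 - a)) (xv - k))
          = ENNReal.ofReal ((Real.exp (-(lam * (1 - a))) * (lam * (1 - a)) ^ (xv - k)
              / (Nat.factorial (xv - k))) * (xp.choose k : ℝ) * a ^ k * (1 - a) ^ (xp - k)) := by
        intro k
        rw [← ENNReal.ofReal_mul (by positivity)]
        congr 1
        simp only [poissonProb]
        ring
      simp only [hterm]
      rw [← ENNReal.ofReal_sum_of_nonneg (fun k _ => by
        have hla : (0 : ℝ) ≤ lam * (1 - a) := mul_nonneg M.lam_pos.le ha2
        positivity)]
      have hprev_nonneg : 0 ≤ Real.exp (-lam) * lam ^ (x M.root) / (Nat.factorial (x M.root))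
          * ∏ u ∈ S'.erase M.root, conv M x u := by
        have hpr : 0 ≤ ∏ u ∈ S'.erase M.root, conv M x u :=
          Finset.prod_nonneg fun u hu => conv_nonneg M x (Finset.mem_erase.1 hu).1
        have hfac : (0:ℝ) < (Nat.factorial (x M.root) : ℝ) := by
          exact_mod_cast Nat.factorial_pos (x M.root)
        have he : (0:ℝ) ≤ Real.exp (-lam) * lam ^ (x M.root) / (Nat.factorial (x M.root)) := by
          apply div_nonneg _ hfac.le
          exact mul_nonneg (Real.exp_nonneg _) (pow_nonneg M.lam_pos.le _)
        exact mul_nonneg he hpr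
      rw [← ENNReal.ofReal_mul hprev_nonneg]
      congr 1
      have hprod : ∏ u ∈ S.erase M.root, conv M x u
          = conv M x v * ∏ u ∈ S'.erase M.root, conv M x u := by
        have hee : S'.erase M.root = (S.erase M.root).erase v := by
          ext u
          simp only [hS', Finset.mem_erase]
          tauto
        rw [hee]
        exact (Finset.mul_prod_erase _ _ (Finset.mem_erase.2 ⟨hv, hvS⟩)).symm
      rw [hprod]
      have hconv : conv M x v = ∑ k ∈ Finset.range (min xp xv + 1),
          (Real.exp (-(lam * (1 - a))) * (lam * (1 - a)) ^ (xv - k)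
              / (Nat.factorial (xv - k))) * (xp.choose k : ℝ) * a ^ k * (1 - a) ^ (xp - k) := by
        simp [conv, hxp, hxv, ha]
      rw [hconv]
      ring

end Aux

/-- Joint pmf of the MPMRF: for every `x ∈ ℕ^V`,
`Pr(∩_v {N_v = x_v})` equals the product of the Poisson pmf at the root and, over the
non-root vertices, the convolution of the Poisson innovation pmf with the binomial
thinning pmf of the parent's value. -/
theorem mpmrf_joint_pmf {V : Type} [Fintype V] [DecidableEq V]
    (G : SimpleGraph V) (lam : ℝ) (alpha : Sym2 V → ℝ)
    (Ω : Type) [MeasureSpace Ω] [IsProbabilityMeasure (ℙ : Measure Ω)]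
    (M : MPMRF G lam alpha Ω) (x : V → ℕ) :
    ℙ {ω | ∀ v : V, M.N v ω = x v}
      = ENNReal.ofReal
          ((Real.exp (-lam) * lam ^ (x M.root) / (Nat.factorial (x M.root)))
            * ∏ v ∈ Finset.univ.erase M.root,
                ∑ k ∈ Finset.range (min (x (M.pa v)) (x v) + 1),
                  (Real.exp (-(lam * (1 - alpha s(M.pa v, v))))
                      * (lam * (1 - alpha s(M.pa v, v))) ^ (x v - k)
                      / (Nat.factorial (x v - k)))
                    * ((x (M.pa v)).choose k)
                    * (alpha s(M.pa v, v)) ^ k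
                    * (1 - alpha s(M.pa v, v)) ^ (x (M.pa v) - k)) := by
  have hev : {ω : Ω | ∀ v : V, M.N v ω = x v} = {ω | ∀ v ∈ Finset.univ, M.N v ω = x v} := by
    simp
  rw [hev, M.joint x Finset.univ.card Finset.univ rfl (Finset.mem_univ _)
    (fun u _ _ => Finset.mem_univ _)]
  congr 1
end
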